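/- For all s ∈ [4/3, 2], the inequality φ₁(s) = −(s−1)·log(2^s − 1) + (s−2)·log(2^s + 1) − s·log(2 sin(π/(2s))) + log 6 ≤ 0 holds. -/

import Mathlib

open Real

noncomputable def F (s : ℝ) : ℝ :=
  -(s - 1) * Real.log ((2 : ℝ) ^ s - 1) + (s - 2) * Real.log ((2 : ℝ) ^ s + 1)
    - s * Real.log (2 * Real.sin (Real.pi / (2 * s))) + Real.log 6

noncomputable def F1 (s : ℝ) : ℝ :=
  -Real.log ((2:ℝ) ^ s - 1) - (s - 1) * ((2:ℝ) ^ s * Real.log 2 / ((2:ℝ) ^ s - 1))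
  + Real.log ((2:ℝ) ^ s + 1) + (s - 2) * ((2:ℝ) ^ s * Real.log 2 / ((2:ℝ) ^ s + 1))
  - Real.log (2 * Real.sin (Real.pi / (2 * s)))
  + Real.pi / (2 * s) * (Real.cos (Real.pi / (2 * s)) / Real.sin (Real.pi / (2 * s)))

noncomputable def F2 (s : ℝ) : ℝ :=
  Real.pi ^ 2 / (4 * s ^ 3 * Real.sin (Real.pi / (2 * s)) ^ 2)
  - 4 * (2:ℝ) ^ s * Real.log 2 / (((2:ℝ) ^ s) ^ 2 - 1)
  + (2:ℝ) ^ s * Real.log 2 ^ 2 * ((s - 1) / ((2:ℝ) ^ s - 1) ^ 2 + (s - 2) / ((2:ℝ) ^ s + 1) ^ 2)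

section basic
variable {s : ℝ} (hs : 1 < s)

lemma two_rpow_pos (s : ℝ) : (0:ℝ) < (2:ℝ) ^ s := Real.rpow_pos_of_pos (by norm_num) s

lemma two_rpow_gt (hs : 1 < s) : (2:ℝ) < (2:ℝ) ^ s := by
  calc (2:ℝ) = (2:ℝ) ^ (1:ℝ) := by norm_num
  _ < (2:ℝ) ^ s := Real.rpow_lt_rpow_left_iff (by norm_num) |>.2 hs

lemma u_pos (hs : 1 < s) : 0 < Real.pi / (2 * s) := by positivity
lemma u_lt (hs : 1 < s) : Real.pi / (2 * s) < Real.pi / 2 := by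
  apply div_lt_div_of_pos_left Real.pi_pos (by norm_num) (by linarith)

lemma sin_u_pos (hs : 1 < s) : 0 < Real.sin (Real.pi / (2 * s)) :=
  Real.sin_pos_of_pos_of_lt_pi (u_pos hs) (by linarith [u_lt hs, Real.pi_pos])

lemma hasDerivAt_two_rpow (s : ℝ) :
    HasDerivAt (fun x : ℝ => (2:ℝ) ^ x) ((2:ℝ) ^ s * Real.log 2) s :=
  (Real.hasStrictDerivAt_const_rpow (by norm_num) s).hasDerivAt

lemma hasDerivAt_u (hs : 1 < s) :
    HasDerivAt (fun x : ℝ => Real.pi / (2 * x)) (-(Real.pi / (2 * s ^ 2))) s := by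
  have h : HasDerivAt (fun x : ℝ => x⁻¹) (-(s^2)⁻¹) s := by
    simpa using hasDerivAt_inv (by linarith : s ≠ 0)
  have h2 := h.const_mul (Real.pi / 2)
  have he : (fun x : ℝ => Real.pi / (2 * x)) = fun x => Real.pi / 2 * x⁻¹ := by
    funext x
    ring
  rw [he]
  refine h2.congr_deriv ?_
  have : s ≠ 0 := by linarith
  field_simp

end basic

lemma aux_ne1 {s : ℝ} (hs : 1 < s) : (2:ℝ) ^ s - 1 ≠ 0 := by
  have := two_rpow_gt hs; linarith

lemma aux_ne2 (s : ℝ) : (2:ℝ) ^ s + 1 ≠ 0 := by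
  have := two_rpow_pos s; linarith

lemma hasDerivAt_F {s : ℝ} (hs : 1 < s) : HasDerivAt F (F1 s) s := by
  have hx := hasDerivAt_two_rpow s
  have h2gt := two_rpow_gt hs
  have hne1 : (2:ℝ) ^ s - 1 ≠ 0 := aux_ne1 hs
  have hne2 : (2:ℝ) ^ s + 1 ≠ 0 := aux_ne2 s
  have hsin := sin_u_pos hs
  have hs0 : s ≠ 0 := by linarith
  have hlog1 : HasDerivAt (fun x : ℝ => Real.log ((2:ℝ) ^ x - 1))
      ((2:ℝ) ^ s * Real.log 2 / ((2:ℝ) ^ s - 1)) s := (hx.sub_const 1).log hne1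
  have hlog2 : HasDerivAt (fun x : ℝ => Real.log ((2:ℝ) ^ x + 1))
      ((2:ℝ) ^ s * Real.log 2 / ((2:ℝ) ^ s + 1)) s := (hx.add_const 1).log hne2
  have hT1 := (((hasDerivAt_id s).sub_const 1).neg).mul hlog1
  have hT2 := ((hasDerivAt_id s).sub_const 2).mul hlog2
  have hu := hasDerivAt_u hs
  have hsind : HasDerivAt (fun x : ℝ => Real.sin (Real.pi / (2 * x)))
      (Real.cos (Real.pi / (2 * s)) * -(Real.pi / (2 * s ^ 2))) s :=
    by exact (Real.hasDerivAt_sin (Real.pi / (2 * s))).comp s hu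
  have h2sin := hsind.const_mul (2:ℝ)
  have hlog3 : HasDerivAt (fun x : ℝ => Real.log (2 * Real.sin (Real.pi / (2 * x))))
      (2 * (Real.cos (Real.pi / (2 * s)) * -(Real.pi / (2 * s ^ 2))) /
        (2 * Real.sin (Real.pi / (2 * s)))) s := h2sin.log (by positivity)
  have hT3 := (hasDerivAt_id s).mul hlog3
  have hAll := ((hT1.add hT2).sub hT3).add_const (Real.log 6)
  have hF : F = fun x : ℝ =>
      (-(x - 1) * Real.log ((2:ℝ) ^ x - 1) + (x - 2) * Real.log ((2:ℝ) ^ x + 1)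
        - x * Real.log (2 * Real.sin (Real.pi / (2 * x)))) + Real.log 6 := by
    funext x; unfold F; ring
  rw [hF]
  refine hAll.congr_deriv ?_
  unfold F1
  simp only [id_eq, Pi.neg_apply]
  field_simp
  ring

lemma trig_id {s : ℝ} (hs : 1 < s) (hsin : 0 < Real.sin (Real.pi/(2*s))) :
  Real.pi ^ 2 / (4 * s ^ 3 * Real.sin (Real.pi / (2 * s)) ^ 2) =
    -(2 * (Real.cos (Real.pi / (2 * s)) * -(Real.pi / (2 * s ^ 2))) / (2 * Real.sin (Real.pi / (2 * s))))
    + (-(Real.pi / (2 * s ^ 2)) * (Real.cos (Real.pi / (2 * s)) / Real.sin (Real.pi / (2 * s)))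
       + Real.pi / (2 * s) *
        ((-Real.sin (Real.pi / (2 * s)) * -(Real.pi / (2 * s ^ 2)) * Real.sin (Real.pi / (2 * s)) -
          Real.cos (Real.pi / (2 * s)) * (Real.cos (Real.pi / (2 * s)) * -(Real.pi / (2 * s ^ 2)))) /
          Real.sin (Real.pi / (2 * s)) ^ 2)) := by
  have pyth := Real.sin_sq_add_cos_sq (Real.pi/(2*s))
  have hs0 : s ≠ 0 := by linarith
  have hsne := ne_of_gt hsin
  generalize hu : Real.pi / (2 * s) = u at *
  have hu2 : u * (2 * s) = Real.pi := by rw [← hu]; field_simp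
  field_simp
  linear_combination (-4*s*u) * pyth - 2 * hu2

lemma alg_id {s : ℝ} (hs : 1 < s) :
  -(4 * (2:ℝ) ^ s * Real.log 2 / (((2:ℝ) ^ s) ^ 2 - 1))
    + (2:ℝ) ^ s * Real.log 2 ^ 2 * ((s - 1) / ((2:ℝ) ^ s - 1) ^ 2 + (s - 2) / ((2:ℝ) ^ s + 1) ^ 2) =
  -((2:ℝ) ^ s * Real.log 2 / ((2:ℝ) ^ s - 1)) -
      (1 * ((2:ℝ) ^ s * Real.log 2 / ((2:ℝ) ^ s - 1)) + (s - 1) *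
        (((2:ℝ) ^ s * Real.log 2 * Real.log 2 * ((2:ℝ) ^ s - 1) -
          (2:ℝ) ^ s * Real.log 2 * ((2:ℝ) ^ s * Real.log 2)) / ((2:ℝ) ^ s - 1) ^ 2))
    + (2:ℝ) ^ s * Real.log 2 / ((2:ℝ) ^ s + 1)
    + (1 * ((2:ℝ) ^ s * Real.log 2 / ((2:ℝ) ^ s + 1)) + (s - 2) *
        (((2:ℝ) ^ s * Real.log 2 * Real.log 2 * ((2:ℝ) ^ s + 1) -
          (2:ℝ) ^ s * Real.log 2 * ((2:ℝ) ^ s * Real.log 2)) / ((2:ℝ) ^ s + 1) ^ 2)) := by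
  have h2gt := two_rpow_gt hs
  have hne1 : (2:ℝ)^s - 1 ≠ 0 := aux_ne1 hs
  have hne2 : (2:ℝ)^s + 1 ≠ 0 := aux_ne2 s
  have hne3 : ((2:ℝ)^s)^2 - 1 ≠ 0 := by nlinarith
  field_simp
  ring

lemma hasDerivAt_F1 {s : ℝ} (hs : 1 < s) : HasDerivAt F1 (F2 s) s := by
  have hx := hasDerivAt_two_rpow s
  have h2gt := two_rpow_gt hs
  have hne1 : (2:ℝ) ^ s - 1 ≠ 0 := aux_ne1 hs
  have hne2 : (2:ℝ) ^ s + 1 ≠ 0 := aux_ne2 s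
  have hsin := sin_u_pos hs
  have hsne := ne_of_gt hsin
  have hs0 : s ≠ 0 := by linarith
  have hxL := hx.mul_const (Real.log 2)
  have hq1 := hxL.div (hx.sub_const 1) hne1
  have hq2 := hxL.div (hx.add_const 1) hne2
  have hlog1 := (hx.sub_const 1).log hne1
  have hlog2 := (hx.add_const 1).log hne2
  have hP1 := ((hasDerivAt_id s).sub_const 1).mul hq1
  have hP2 := ((hasDerivAt_id s).sub_const 2).mul hq2
  have hu := hasDerivAt_u hs
  have hsind : HasDerivAt (fun x : ℝ => Real.sin (Real.pi / (2 * x)))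
      (Real.cos (Real.pi / (2 * s)) * -(Real.pi / (2 * s ^ 2))) s :=
    by exact (Real.hasDerivAt_sin (Real.pi / (2 * s))).comp s hu
  have h2sin := hsind.const_mul (2:ℝ)
  have hlog3 : HasDerivAt (fun x : ℝ => Real.log (2 * Real.sin (Real.pi / (2 * x))))
      (2 * (Real.cos (Real.pi / (2 * s)) * -(Real.pi / (2 * s ^ 2))) /
        (2 * Real.sin (Real.pi / (2 * s)))) s := h2sin.log (by positivity)
  have hcosd : HasDerivAt (fun x : ℝ => Real.cos (Real.pi / (2 * x)))
      (-Real.sin (Real.pi / (2 * s)) * -(Real.pi / (2 * s ^ 2))) s :=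
    by exact (Real.hasDerivAt_cos (Real.pi / (2 * s))).comp s hu
  have hquot := hcosd.div hsind hsne
  have hcot := hu.mul hquot
  have hAll := ((((hlog1.neg.sub hP1).add hlog2).add hP2).sub hlog3).add hcot
  simp only [id_eq, Pi.div_apply] at hAll
  have hF1 : F1 = fun x : ℝ =>
      -Real.log ((2:ℝ) ^ x - 1) - (x - 1) * ((2:ℝ) ^ x * Real.log 2 / ((2:ℝ) ^ x - 1))
      + Real.log ((2:ℝ) ^ x + 1) + (x - 2) * ((2:ℝ) ^ x * Real.log 2 / ((2:ℝ) ^ x + 1))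
      - Real.log (2 * Real.sin (Real.pi / (2 * x)))
      + Real.pi / (2 * x) * (Real.cos (Real.pi / (2 * x)) / Real.sin (Real.pi / (2 * x))) := rfl
  rw [hF1]
  refine hAll.congr_deriv ?_
  have hT := trig_id hs hsin
  have hA := alg_id hs
  unfold F2
  have e1 : ((2:ℝ)^s - 1)⁻¹ - ((2:ℝ)^s + 1)⁻¹ = 2 * (((2:ℝ)^s)^2 - 1)⁻¹ := by
    have hne3 : ((2:ℝ)^s)^2 - 1 ≠ 0 := by nlinarith
    field_simp
    ring
  have pyth := Real.sin_sq_add_cos_sq (Real.pi/(2*s))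
  linear_combination hT + hA + (-4*(2:ℝ)^s*Real.log 2) * e1
    + (Real.pi^2 * (s⁻¹)^3 / 2 * (Real.sin (Real.pi/(2*s)))⁻¹^2) * pyth

lemma F_two : F 2 = 0 := by
  unfold F
  have h4 : (2:ℝ) ^ (2:ℝ) = 4 := by
    rw [show (2:ℝ) = ((2:ℕ):ℝ) by norm_num, Real.rpow_natCast]; norm_num
  rw [h4]
  have hpi : Real.pi / (2 * 2) = Real.pi / 4 := by ring
  rw [hpi, Real.sin_pi_div_four]
  have h2 : 2 * (Real.sqrt 2 / 2) = Real.sqrt 2 := by ring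
  rw [h2, Real.log_sqrt (by norm_num)]
  have h6 : Real.log 6 = Real.log 2 + Real.log 3 := by
    rw [show (6:ℝ) = 2 * 3 by norm_num, Real.log_mul (by norm_num) (by norm_num)]
  rw [h6]
  have h41 : (4:ℝ) - 1 = 3 := by norm_num
  rw [h41]
  ring

lemma y_facts : ∃ y : ℝ, (2:ℝ) ^ ((1:ℝ)/3) = y ∧ y ^ 3 = 2 ∧ 1.2599 ≤ y := by
  refine ⟨(2:ℝ) ^ ((1:ℝ)/3), rfl, ?_, ?_⟩
  · rw [← Real.rpow_natCast ((2:ℝ) ^ ((1:ℝ)/3)) 3, ← Real.rpow_mul (by norm_num)]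
    norm_num
  · have hy3 : ((2:ℝ) ^ ((1:ℝ)/3)) ^ 3 = 2 := by
      rw [← Real.rpow_natCast ((2:ℝ) ^ ((1:ℝ)/3)) 3, ← Real.rpow_mul (by norm_num)]
      norm_num
    have hypos : (0:ℝ) < (2:ℝ) ^ ((1:ℝ)/3) := Real.rpow_pos_of_pos (by norm_num) _
    nlinarith [hy3, hypos, sq_nonneg ((2:ℝ) ^ ((1:ℝ)/3) - 1.2599), sq_nonneg ((2:ℝ) ^ ((1:ℝ)/3) + 1.2599)]

lemma F_fourthirds : F (4/3) ≤ 0 := by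
  obtain ⟨y, hy, hy3, hylb⟩ := y_facts
  have hypos : (0:ℝ) < y := by nlinarith
  unfold F
  have h43 : (2:ℝ) ^ ((4:ℝ)/3) = 2 * y := by
    rw [show (4:ℝ)/3 = 1 + 1/3 by norm_num, Real.rpow_add (by norm_num), Real.rpow_one, hy]
  have hpi : Real.pi / (2 * (4/3)) = Real.pi / 2 - Real.pi / 8 := by ring
  rw [show ((4:ℝ)/3) = ((4/3 : ℝ)) by norm_num] at h43
  rw [h43, hpi, Real.sin_pi_div_two_sub, Real.cos_pi_div_eight]
  have hs2 : Real.sqrt 2 ^ 2 = 2 := Real.sq_sqrt (by norm_num)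
  have hs2lb : (1.4142:ℝ) ≤ Real.sqrt 2 := by
    nlinarith [hs2, Real.sqrt_nonneg 2]
  have h2c : 2 * (Real.sqrt (2 + Real.sqrt 2) / 2) = Real.sqrt (2 + Real.sqrt 2) := by ring
  rw [h2c, Real.log_sqrt (by positivity)]
  -- abbreviations
  set r := Real.sqrt 2 with hr
  have ha : (0:ℝ) < 2*y - 1 := by nlinarith
  have hb : (0:ℝ) < 2*y + 1 := by nlinarith
  have hc : (0:ℝ) < 2 + r := by nlinarith
  have hprod : (216:ℝ) ≤ (2*y - 1) * (2*y + 1)^2 * (2 + r)^2 := by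
    have h1 : (2*y - 1) * (2*y + 1)^2 = 15 + 4*y^2 - 2*y := by linear_combination 8 * hy3
    rw [h1]
    nlinarith [mul_nonneg (sub_nonneg.2 hylb) (sub_nonneg.2 hs2lb), sq_nonneg (y - 1.2599), hs2]
  have hlog : Real.log 216 ≤ Real.log (2*y-1) + 2 * Real.log (2*y+1) + 2 * Real.log (2+r) := by
    have := Real.log_le_log (by norm_num : (0:ℝ) < 216) hprod
    rwa [Real.log_mul (by positivity) (by positivity), Real.log_mul (by positivity) (by positivity),
      Real.log_pow, Real.log_pow] at this
    
  have hl216 : Real.log 216 = 3 * Real.log 6 := by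
    rw [show (216:ℝ) = 6 ^ 3 by norm_num, Real.log_pow]; push_cast; ring
  rw [hl216] at hlog
  linarith

lemma sin_u_le {s a V S : ℝ} (ha : 1 < a) (hsa : a ≤ s)
    (hV0 : 0 ≤ V) (hV1 : V ≤ 1) (hV : 2*a*V ≤ 3.141592*(a-1))
    (ht : 0 ≤ V/2 - (V/2)^3/6 - (V/2)^4*(5/96))
    (hS : 1 - 2*(V/2 - (V/2)^3/6 - (V/2)^4*(5/96))^2 ≤ S) :
    Real.sin (Real.pi/(2*s)) ≤ S := by
  have hs1 : 1 < s := lt_of_lt_of_le ha hsa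
  have hs0 : (0:ℝ) < s := by linarith
  have ha0 : (0:ℝ) < a := by linarith
  have hpi := Real.pi_gt_d6
  have hpi2 := Real.pi_lt_d2
  -- sin (π/(2s)) = cos (π(s-1)/(2s))
  have hid : Real.pi/2 - Real.pi/(2*s) = Real.pi*(s-1)/(2*s) := by field_simp
  have hsc : Real.sin (Real.pi/(2*s)) = Real.cos (Real.pi*(s-1)/(2*s)) := by
    rw [← hid, Real.cos_pi_div_two_sub]
  rw [hsc]
  set v := Real.pi*(s-1)/(2*s) with hv
  have hvV : V ≤ v := by
    rw [hv]
    have h0 : V ≤ 3.141592*(a-1)/(2*a) := by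
      rw [le_div_iff₀ (by positivity)]; nlinarith
    have hmono : (a-1)*s ≤ (s-1)*a := by nlinarith
    have h1 : 3.141592*(a-1)/(2*a) ≤ Real.pi*(s-1)/(2*s) := by
      rw [div_le_div_iff₀ (by positivity) (by positivity)]
      nlinarith [hmono, hpi, mul_nonneg (by linarith : (0:ℝ) ≤ s-1) (by linarith : (0:ℝ) ≤ a)]
    linarith
  have hvpi : v ≤ Real.pi := by
    rw [hv, div_le_iff₀ (by positivity)]
    nlinarith [Real.pi_pos]
  have hcos : Real.cos v ≤ Real.cos V :=
    Real.cos_le_cos_of_nonneg_of_le_pi hV0 hvpi hvV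
  -- cos V = 1 - 2 sin(V/2)^2
  have hcv : Real.cos V = 1 - 2 * Real.sin (V/2)^2 := by
    have e : Real.cos (2*(V/2)) = Real.cos V := by congr 1; ring
    rw [← e, Real.cos_two_mul']
    have := Real.sin_sq_add_cos_sq (V/2)
    linarith
  -- sin(V/2) ≥ t
  have hsb := Real.sin_bound (x := V/2) (by rw [abs_of_nonneg (by linarith)]; linarith)
  rw [abs_of_nonneg (by linarith : (0:ℝ) ≤ V/2)] at hsb
  have htle : V/2 - (V/2)^3/6 - (V/2)^4*(5/96) ≤ Real.sin (V/2) := by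
    have := abs_le.1 hsb
    nlinarith [this.1, mul_le_mul_of_nonneg_left (by linarith : V/2 ≤ 1/2) (pow_nonneg (by linarith : (0:ℝ) ≤ V/2) 4)]
  have hsin2 : (V/2 - (V/2)^3/6 - (V/2)^4*(5/96))^2 ≤ Real.sin (V/2)^2 :=
    pow_le_pow_left₀ ht htle 2
  calc Real.cos v ≤ Real.cos V := hcos
  _ = 1 - 2 * Real.sin (V/2)^2 := hcv
  _ ≤ 1 - 2*(V/2 - (V/2)^3/6 - (V/2)^4*(5/96))^2 := by linarith
  _ ≤ S := hS

lemma rpow_lb {c : ℝ} (k n : ℕ) (hn : 0 < n) (hc : 0 ≤ c) (h : c ^ n ≤ 2 ^ k) :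
    c ≤ (2:ℝ) ^ ((k:ℝ)/(n:ℝ)) := by
  calc c = (c ^ n) ^ ((n:ℝ)⁻¹) := (Real.pow_rpow_inv_natCast hc hn.ne').symm
  _ ≤ ((2:ℝ) ^ k) ^ ((n:ℝ)⁻¹) := Real.rpow_le_rpow (by positivity) h (by positivity)
  _ = (2:ℝ) ^ ((k:ℝ)/(n:ℝ)) := by
      rw [← Real.rpow_natCast 2 k, ← Real.rpow_mul (by norm_num), div_eq_mul_inv]

lemma rpow_ub {c : ℝ} (k n : ℕ) (hn : 0 < n) (hc : 0 ≤ c) (h : (2:ℝ) ^ k ≤ c ^ n) :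
    (2:ℝ) ^ ((k:ℝ)/(n:ℝ)) ≤ c := by
  calc (2:ℝ) ^ ((k:ℝ)/(n:ℝ)) = ((2:ℝ) ^ k) ^ ((n:ℝ)⁻¹) := by
        rw [← Real.rpow_natCast 2 k, ← Real.rpow_mul (by norm_num), div_eq_mul_inv]
  _ ≤ (c ^ n) ^ ((n:ℝ)⁻¹) := Real.rpow_le_rpow (by positivity) h (by positivity)
  _ = c := Real.pow_rpow_inv_natCast hc hn.ne'

lemma frac1 {xa x : ℝ} (h1 : 1 < xa) (hle : xa ≤ x) : x/(x^2-1) ≤ xa/(xa^2-1) := by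
  have h2 : (0:ℝ) < xa^2 - 1 := by nlinarith
  have h3 : (0:ℝ) < x^2 - 1 := by nlinarith
  rw [div_le_div_iff₀ h3 h2]
  nlinarith [mul_nonneg (sub_nonneg.2 hle) (by nlinarith : (0:ℝ) ≤ x*xa - 1)]

lemma frac2 {x xb : ℝ} (h1 : 1 < x) (hle : x ≤ xb) : xb/(xb-1)^2 ≤ x/(x-1)^2 := by
  have h2 : (0:ℝ) < x - 1 := by linarith
  have h3 : (0:ℝ) < xb - 1 := by linarith
  rw [div_le_div_iff₀ (by positivity) (by positivity)]
  nlinarith [mul_nonneg (sub_nonneg.2 hle) (by nlinarith : (0:ℝ) ≤ x*xb - 1)]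

lemma frac3 {xa x : ℝ} (h1 : 1 < xa) (hle : xa ≤ x) : x/(x+1)^2 ≤ xa/(xa+1)^2 := by
  have h2 : (0:ℝ) < xa + 1 := by linarith
  have h3 : (0:ℝ) < x + 1 := by linarith
  rw [div_le_div_iff₀ (by positivity) (by positivity)]
  nlinarith [mul_nonneg (sub_nonneg.2 hle) (by nlinarith : (0:ℝ) ≤ x*xa - 1)]

lemma sq_gt1 {x : ℝ} (h : 1 < x) : 0 < x^2 - 1 := by nlinarith

set_option maxHeartbeats 1000000 in
lemma step_core {s a b xa xb S : ℝ}
    (hsa : a ≤ s) (hsb : s ≤ b)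
    (ha : 4/3 ≤ a) (hb : b ≤ 2)
    (hxa : xa ≤ (2:ℝ) ^ (a:ℝ)) (hxb : (2:ℝ) ^ (b:ℝ) ≤ xb) (hxa1 : 1 < xa)
    (hS0 : 0 < S) (hsinS : Real.sin (Real.pi/(2*s)) ≤ S)
    (key : 0 ≤ 3.141592^2/(4*b^3*S^2) - 4*0.6931471808*xa/(xa^2-1)
          + 0.6931471803^2*(a-1)*xb/(xb-1)^2 + 0.6931471808^2*(a-2)*xa/(xa+1)^2) :
    0 ≤ F2 s := by
  have ha1 : (1:ℝ) < a := by linarith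
  have hs1 : (1:ℝ) < s := by linarith
  have hsin := sin_u_pos hs1
  have hx := two_rpow_pos s
  set x := (2:ℝ) ^ s with hxdef
  have hxlo : xa ≤ x := le_trans hxa ((Real.rpow_le_rpow_left_iff (by norm_num)).2 hsa)
  have hxhi : x ≤ xb := le_trans ((Real.rpow_le_rpow_left_iff (by norm_num)).2 hsb) hxb
  have hx1 : 1 < x := lt_of_lt_of_le hxa1 hxlo
  have hxb1 : 1 < xb := lt_of_lt_of_le hx1 hxhi
  have hLlo := Real.log_two_gt_d9
  have hLhi := Real.log_two_lt_d9
  have hL0 : (0:ℝ) < Real.log 2 := by linarith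
  have hpi := Real.pi_gt_d6
  have hb0 : (0:ℝ) < b := by linarith
  have hs0 : (0:ℝ) < s := by linarith
  -- A term
  have hA : 3.141592^2/(4*b^3*S^2) ≤ Real.pi^2/(4*s^3*Real.sin (Real.pi/(2*s))^2) := by
    have hd1 : (0:ℝ) < 4*s^3*Real.sin (Real.pi/(2*s))^2 := by positivity
    have hd2 : (0:ℝ) < 4*b^3*S^2 := by positivity
    rw [div_le_div_iff₀ hd2 hd1]
    have h1 : Real.sin (Real.pi/(2*s))^2 ≤ S^2 := pow_le_pow_left₀ (le_of_lt hsin) hsinS 2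
    have h2 : s^3 ≤ b^3 := pow_le_pow_left₀ (le_of_lt hs0) hsb 3
    have hpisq : (3.141592:ℝ)^2 ≤ Real.pi^2 :=
      pow_le_pow_left₀ (by norm_num) (le_of_lt hpi) 2
    have e1 : s^3*Real.sin (Real.pi/(2*s))^2 ≤ b^3*S^2 :=
      mul_le_mul h2 h1 (sq_nonneg _) (by positivity)
    have e2 := mul_le_mul hpisq e1 (by positivity) (by positivity)
    linarith
  -- B term
  have hB : 4*x*Real.log 2/(x^2-1) ≤ 4*0.6931471808*xa/(xa^2-1) := by
    have hf := frac1 hxa1 hxlo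
    have hfr0 : (0:ℝ) ≤ x/(x^2-1) :=
      div_nonneg (by linarith) (le_of_lt (sq_gt1 hx1))
    have e1 : Real.log 2 * (x/(x^2-1)) ≤ 0.6931471808 * (xa/(xa^2-1)) :=
      mul_le_mul (le_of_lt hLhi) hf hfr0 (by norm_num)
    calc 4*x*Real.log 2/(x^2-1) = 4*(Real.log 2 * (x/(x^2-1))) := by ring
    _ ≤ 4*(0.6931471808 * (xa/(xa^2-1))) := by linarith
    _ = 4*0.6931471808*xa/(xa^2-1) := by ring
  -- C1 term
  have hC1 : 0.6931471803^2*(a-1)*xb/(xb-1)^2 ≤ Real.log 2^2*(s-1)*x/(x-1)^2 := by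
    have hf := frac2 hx1 hxhi
    have h1 : (0.6931471803:ℝ)^2 ≤ Real.log 2^2 :=
      pow_le_pow_left₀ (by norm_num) (le_of_lt hLlo) 2
    have h2 : a - 1 ≤ s - 1 := by linarith
    calc 0.6931471803^2*(a-1)*xb/(xb-1)^2 = 0.6931471803^2*(a-1)*(xb/(xb-1)^2) := by ring
    _ ≤ Real.log 2^2*(s-1)*(x/(x-1)^2) := by
        apply mul_le_mul (mul_le_mul h1 h2 (by linarith) (sq_nonneg _)) hf
          (div_nonneg (by linarith) (by positivity))
          (mul_nonneg (sq_nonneg _) (by linarith))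
    _ = Real.log 2^2*(s-1)*x/(x-1)^2 := by ring
  -- C2 term
  have hC2 : 0.6931471808^2*(a-2)*xa/(xa+1)^2 ≤ Real.log 2^2*(s-2)*x/(x+1)^2 := by
    rw [show (0.6931471808:ℝ)^2*(a-2)*xa/(xa+1)^2
        = -(0.6931471808^2*(2-a)*(xa/(xa+1)^2)) by ring,
        show Real.log 2^2*(s-2)*x/(x+1)^2 = -(Real.log 2^2*(2-s)*(x/(x+1)^2)) by ring,
        neg_le_neg_iff]
    have hf := frac3 hxa1 hxlo
    have h1 : Real.log 2^2 ≤ (0.6931471808:ℝ)^2 :=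
      pow_le_pow_left₀ (le_of_lt hL0) (le_of_lt hLhi) 2
    have h2 : 2 - s ≤ 2 - a := by linarith
    apply mul_le_mul (mul_le_mul h1 h2 (by linarith) (by norm_num)) hf
      (div_nonneg (by linarith) (by positivity))
      (mul_nonneg (by norm_num) (by linarith))
  have hF2 : F2 s = Real.pi^2/(4*s^3*Real.sin (Real.pi/(2*s))^2)
      - 4*x*Real.log 2/(x^2-1)
      + Real.log 2^2*(s-1)*x/(x-1)^2 + Real.log 2^2*(s-2)*x/(x+1)^2 := by
    unfold F2
    rw [← hxdef]
    have hne1 : x - 1 ≠ 0 := ne_of_gt (by linarith)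
    have hne2 : x + 1 ≠ 0 := ne_of_gt (by linarith)
    have hne3 : x^2 - 1 ≠ 0 := ne_of_gt (sq_gt1 hx1)
    field_simp
    ring
  rw [hF2]
  linarith [hA, hB, hC1, hC2, key]

lemma step {s a b xa xb V S : ℝ}
    (hsa : a ≤ s) (hsb : s ≤ b)
    (ha : 4/3 ≤ a) (hb : b ≤ 2)
    (hxa : xa ≤ (2:ℝ) ^ (a:ℝ)) (hxb : (2:ℝ) ^ (b:ℝ) ≤ xb) (hxa1 : 1 < xa)
    (hV0 : 0 ≤ V) (hV1 : V ≤ 1) (hV : 2*a*V ≤ 3.141592*(a-1))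
    (ht : 0 ≤ V/2 - (V/2)^3/6 - (V/2)^4*(5/96))
    (hS : 1 - 2*(V/2 - (V/2)^3/6 - (V/2)^4*(5/96))^2 ≤ S) (hS0 : 0 < S)
    (key : 0 ≤ 3.141592^2/(4*b^3*S^2) - 4*0.6931471808*xa/(xa^2-1)
          + 0.6931471803^2*(a-1)*xb/(xb-1)^2 + 0.6931471808^2*(a-2)*xa/(xa+1)^2) :
    0 ≤ F2 s :=
  step_core hsa hsb ha hb hxa hxb hxa1 hS0
    (sin_u_le (by linarith) hsa hV0 hV1 hV ht hS) key

lemma pow_split8 (x : ℝ) (n : ℕ) : x ^ n = (x ^ (n / 8)) ^ 8 * x ^ (n % 8) := by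
  rw [← pow_mul, ← pow_add, Nat.div_add_mod']

lemma I0 {s : ℝ} (h1 : (4/3:ℝ) ≤ s) (h2 : s ≤ (343/256:ℝ)) : 0 ≤ F2 s :=
  step (a := 4/3) (b := 343/256) (xa := 25198420997/10000000000) (xb := 6328097573/2500000000) (V := 392699/1000000) (S := 9239418579/10000000000)
    h1 h2 (by norm_num) (by norm_num)
    (by have := rpow_lb (c := 25198420997/10000000000) 1024 768 (by norm_num) (by norm_num) (by rw [pow_split8 _ 768, pow_split8 (2:ℝ) 1024]; norm_num); norm_num at this ⊢; exact this)
    (by have := rpow_ub (c := 6328097573/2500000000) 1029 768 (by norm_num) (by norm_num) (by rw [pow_split8 _ 768, pow_split8 (2:ℝ) 1029]; norm_num); norm_num at this ⊢; exact this)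
    (by norm_num) (by norm_num) (by norm_num) (by norm_num)
    (by norm_num) (by norm_num) (by norm_num) (by norm_num)

lemma I1 {s : ℝ} (h1 : (343/256:ℝ) ≤ s) (h2 : s ≤ (517/384:ℝ)) : 0 ≤ F2 s :=
  step (a := 343/256) (b := 517/384) (xa := 25312390291/10000000000) (xb := 5085375011/2000000000) (V := 1992117/5000000) (S := 9217407911/10000000000)
    h1 h2 (by norm_num) (by norm_num)
    (by have := rpow_lb (c := 25312390291/10000000000) 1029 768 (by norm_num) (by norm_num) (by rw [pow_split8 _ 768, pow_split8 (2:ℝ) 1029]; norm_num); norm_num at this ⊢; exact this)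
    (by have := rpow_ub (c := 5085375011/2000000000) 1034 768 (by norm_num) (by norm_num) (by rw [pow_split8 _ 768, pow_split8 (2:ℝ) 1034]; norm_num); norm_num at this ⊢; exact this)
    (by norm_num) (by norm_num) (by norm_num) (by norm_num)
    (by norm_num) (by norm_num) (by norm_num) (by norm_num)

lemma I2 {s : ℝ} (h1 : (517/384:ℝ) ≤ s) (h2 : s ≤ (1039/768:ℝ)) : 0 ≤ F2 s :=
  step (a := 517/384) (b := 1039/768) (xa := 12713437527/5000000000) (xb := 25541877617/10000000000) (V := 161637/400000) (S := 9195314961/10000000000)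
    h1 h2 (by norm_num) (by norm_num)
    (by have := rpow_lb (c := 12713437527/5000000000) 1034 768 (by norm_num) (by norm_num) (by rw [pow_split8 _ 768, pow_split8 (2:ℝ) 1034]; norm_num); norm_num at this ⊢; exact this)
    (by have := rpow_ub (c := 25541877617/10000000000) 1039 768 (by norm_num) (by norm_num) (by rw [pow_split8 _ 768, pow_split8 (2:ℝ) 1039]; norm_num); norm_num at this ⊢; exact this)
    (by norm_num) (by norm_num) (by norm_num) (by norm_num)
    (by norm_num) (by norm_num) (by norm_num) (by norm_num)

lemma I3 {s : ℝ} (h1 : (1039/768:ℝ) ≤ s) (h2 : s ≤ (1043/768:ℝ)) : 0 ≤ F2 s :=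
  step (a := 1039/768) (b := 1043/768) (xa := 1596367351/625000000) (xb := 25634254057/10000000000) (V := 4097071/10000000) (S := 9173145957/10000000000)
    h1 h2 (by norm_num) (by norm_num)
    (by have := rpow_lb (c := 1596367351/625000000) 1039 768 (by norm_num) (by norm_num) (by rw [pow_split8 _ 768, pow_split8 (2:ℝ) 1039]; norm_num); norm_num at this ⊢; exact this)
    (by have := rpow_ub (c := 25634254057/10000000000) 1043 768 (by norm_num) (by norm_num) (by rw [pow_split8 _ 768, pow_split8 (2:ℝ) 1043]; norm_num); norm_num at this ⊢; exact this)
    (by norm_num) (by norm_num) (by norm_num) (by norm_num)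
    (by norm_num) (by norm_num) (by norm_num) (by norm_num)

lemma I4 {s : ℝ} (h1 : (1043/768:ℝ) ≤ s) (h2 : s ≤ (349/256:ℝ)) : 0 ≤ F2 s :=
  step (a := 1043/768) (b := 349/256) (xa := 3204281757/1250000000) (xb := 25726964591/10000000000) (V := 5177/12500) (S := 9155360311/10000000000)
    h1 h2 (by norm_num) (by norm_num)
    (by have := rpow_lb (c := 3204281757/1250000000) 1043 768 (by norm_num) (by norm_num) (by rw [pow_split8 _ 768, pow_split8 (2:ℝ) 1043]; norm_num); norm_num at this ⊢; exact this)
    (by have := rpow_ub (c := 25726964591/10000000000) 1047 768 (by norm_num) (by norm_num) (by rw [pow_split8 _ 768, pow_split8 (2:ℝ) 1047]; norm_num); norm_num at this ⊢; exact this)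
    (by norm_num) (by norm_num) (by norm_num) (by norm_num)
    (by norm_num) (by norm_num) (by norm_num) (by norm_num)

lemma I5 {s : ℝ} (h1 : (349/256:ℝ) ≤ s) (h2 : s ≤ (1051/768:ℝ)) : 0 ≤ F2 s :=
  step (a := 349/256) (b := 1051/768) (xa := 2572696459/1000000000) (xb := 25820010429/10000000000) (V := 1046447/2500000) (S := 9137533301/10000000000)
    h1 h2 (by norm_num) (by norm_num)
    (by have := rpow_lb (c := 2572696459/1000000000) 1047 768 (by norm_num) (by norm_num) (by rw [pow_split8 _ 768, pow_split8 (2:ℝ) 1047]; norm_num); norm_num at this ⊢; exact this)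
    (by have := rpow_ub (c := 25820010429/10000000000) 1051 768 (by norm_num) (by norm_num) (by rw [pow_split8 _ 768, pow_split8 (2:ℝ) 1051]; norm_num); norm_num at this ⊢; exact this)
    (by norm_num) (by norm_num) (by norm_num) (by norm_num)
    (by norm_num) (by norm_num) (by norm_num) (by norm_num)

lemma I6 {s : ℝ} (h1 : (1051/768:ℝ) ≤ s) (h2 : s ≤ (1055/768:ℝ)) : 0 ≤ F2 s :=
  step (a := 1051/768) (b := 1055/768) (xa := 6455002607/2500000000) (xb := 12956696391/5000000000) (V := 105741/250000) (S := 4559833689/5000000000)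
    h1 h2 (by norm_num) (by norm_num)
    (by have := rpow_lb (c := 6455002607/2500000000) 1051 768 (by norm_num) (by norm_num) (by rw [pow_split8 _ 768, pow_split8 (2:ℝ) 1051]; norm_num); norm_num at this ⊢; exact this)
    (by have := rpow_ub (c := 12956696391/5000000000) 1055 768 (by norm_num) (by norm_num) (by rw [pow_split8 _ 768, pow_split8 (2:ℝ) 1055]; norm_num); norm_num at this ⊢; exact this)
    (by norm_num) (by norm_num) (by norm_num) (by norm_num)
    (by norm_num) (by norm_num) (by norm_num) (by norm_num)

lemma I7 {s : ℝ} (h1 : (1055/768:ℝ) ≤ s) (h2 : s ≤ (353/256:ℝ)) : 0 ≤ F2 s :=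
  step (a := 1055/768) (b := 353/256) (xa := 25913392781/10000000000) (xb := 6501778217/2500000000) (V := 106829/250000) (S := 2275441321/2500000000)
    h1 h2 (by norm_num) (by norm_num)
    (by have := rpow_lb (c := 25913392781/10000000000) 1055 768 (by norm_num) (by norm_num) (by rw [pow_split8 _ 768, pow_split8 (2:ℝ) 1055]; norm_num); norm_num at this ⊢; exact this)
    (by have := rpow_ub (c := 6501778217/2500000000) 1059 768 (by norm_num) (by norm_num) (by rw [pow_split8 _ 768, pow_split8 (2:ℝ) 1059]; norm_num); norm_num at this ⊢; exact this)
    (by norm_num) (by norm_num) (by norm_num) (by norm_num)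
    (by norm_num) (by norm_num) (by norm_num) (by norm_num)

lemma I8 {s : ℝ} (h1 : (353/256:ℝ) ≤ s) (h2 : s ≤ (177/128:ℝ)) : 0 ≤ F2 s :=
  step (a := 353/256) (b := 177/128) (xa := 26007112867/10000000000) (xb := 3259703163/1250000000) (V := 4316351/10000000) (S := 9083830073/10000000000)
    h1 h2 (by norm_num) (by norm_num)
    (by have := rpow_lb (c := 26007112867/10000000000) 1059 768 (by norm_num) (by norm_num) (by rw [pow_split8 _ 768, pow_split8 (2:ℝ) 1059]; norm_num); norm_num at this ⊢; exact this)
    (by have := rpow_ub (c := 3259703163/1250000000) 1062 768 (by norm_num) (by norm_num) (by rw [pow_split8 _ 768, pow_split8 (2:ℝ) 1062]; norm_num); norm_num at this ⊢; exact this)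
    (by norm_num) (by norm_num) (by norm_num) (by norm_num)
    (by norm_num) (by norm_num) (by norm_num) (by norm_num)

lemma I9 {s : ℝ} (h1 : (177/128:ℝ) ≤ s) (h2 : s ≤ (355/256:ℝ)) : 0 ≤ F2 s :=
  step (a := 177/128) (b := 355/256) (xa := 26077625303/10000000000) (xb := 26148328919/10000000000) (V := 4348531/10000000) (S := 226758959/250000000)
    h1 h2 (by norm_num) (by norm_num)
    (by have := rpow_lb (c := 26077625303/10000000000) 1062 768 (by norm_num) (by norm_num) (by rw [pow_split8 _ 768, pow_split8 (2:ℝ) 1062]; norm_num); norm_num at this ⊢; exact this)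
    (by have := rpow_ub (c := 26148328919/10000000000) 1065 768 (by norm_num) (by norm_num) (by rw [pow_split8 _ 768, pow_split8 (2:ℝ) 1065]; norm_num); norm_num at this ⊢; exact this)
    (by norm_num) (by norm_num) (by norm_num) (by norm_num)
    (by norm_num) (by norm_num) (by norm_num) (by norm_num)

lemma I10 {s : ℝ} (h1 : (355/256:ℝ) ≤ s) (h2 : s ≤ (89/64:ℝ)) : 0 ≤ F2 s :=
  step (a := 355/256) (b := 89/64) (xa := 13074164459/5000000000) (xb := 26219224231/10000000000) (V := 4380529/10000000) (S := 9056870853/10000000000)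
    h1 h2 (by norm_num) (by norm_num)
    (by have := rpow_lb (c := 13074164459/5000000000) 1065 768 (by norm_num) (by norm_num) (by rw [pow_split8 _ 768, pow_split8 (2:ℝ) 1065]; norm_num); norm_num at this ⊢; exact this)
    (by have := rpow_ub (c := 26219224231/10000000000) 1068 768 (by norm_num) (by norm_num) (by rw [pow_split8 _ 768, pow_split8 (2:ℝ) 1068]; norm_num); norm_num at this ⊢; exact this)
    (by norm_num) (by norm_num) (by norm_num) (by norm_num)
    (by norm_num) (by norm_num) (by norm_num) (by norm_num)

lemma I11 {s : ℝ} (h1 : (89/64:ℝ) ≤ s) (h2 : s ≤ (357/256:ℝ)) : 0 ≤ F2 s :=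
  step (a := 89/64) (b := 357/256) (xa := 2621922423/1000000000) (xb := 26290311759/10000000000) (V := 1103087/2500000) (S := 9043368001/10000000000)
    h1 h2 (by norm_num) (by norm_num)
    (by have := rpow_lb (c := 2621922423/1000000000) 1068 768 (by norm_num) (by norm_num) (by rw [pow_split8 _ 768, pow_split8 (2:ℝ) 1068]; norm_num); norm_num at this ⊢; exact this)
    (by have := rpow_ub (c := 26290311759/10000000000) 1071 768 (by norm_num) (by norm_num) (by rw [pow_split8 _ 768, pow_split8 (2:ℝ) 1071]; norm_num); norm_num at this ⊢; exact this)
    (by norm_num) (by norm_num) (by norm_num) (by norm_num)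
    (by norm_num) (by norm_num) (by norm_num) (by norm_num)

lemma I12 {s : ℝ} (h1 : (357/256:ℝ) ≤ s) (h2 : s ≤ (179/128:ℝ)) : 0 ≤ F2 s :=
  step (a := 357/256) (b := 179/128) (xa := 13145155879/5000000000) (xb := 13180796013/5000000000) (V := 1110997/2500000) (S := 1805970299/2000000000)
    h1 h2 (by norm_num) (by norm_num)
    (by have := rpow_lb (c := 13145155879/5000000000) 1071 768 (by norm_num) (by norm_num) (by rw [pow_split8 _ 768, pow_split8 (2:ℝ) 1071]; norm_num); norm_num at this ⊢; exact this)
    (by have := rpow_ub (c := 13180796013/5000000000) 1074 768 (by norm_num) (by norm_num) (by rw [pow_split8 _ 768, pow_split8 (2:ℝ) 1074]; norm_num); norm_num at this ⊢; exact this)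
    (by norm_num) (by norm_num) (by norm_num) (by norm_num)
    (by norm_num) (by norm_num) (by norm_num) (by norm_num)

lemma I13 {s : ℝ} (h1 : (179/128:ℝ) ≤ s) (h2 : s ≤ (359/256:ℝ)) : 0 ≤ F2 s :=
  step (a := 179/128) (b := 359/256) (xa := 1054463681/400000000) (xb := 26433065553/10000000000) (V := 1118863/2500000) (S := 9016321717/10000000000)
    h1 h2 (by norm_num) (by norm_num)
    (by have := rpow_lb (c := 1054463681/400000000) 1074 768 (by norm_num) (by norm_num) (by rw [pow_split8 _ 768, pow_split8 (2:ℝ) 1074]; norm_num); norm_num at this ⊢; exact this)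
    (by have := rpow_ub (c := 26433065553/10000000000) 1077 768 (by norm_num) (by norm_num) (by rw [pow_split8 _ 768, pow_split8 (2:ℝ) 1077]; norm_num); norm_num at this ⊢; exact this)
    (by norm_num) (by norm_num) (by norm_num) (by norm_num)
    (by norm_num) (by norm_num) (by norm_num) (by norm_num)

lemma I14 {s : ℝ} (h1 : (359/256:ℝ) ≤ s) (h2 : s ≤ (45/32:ℝ)) : 0 ≤ F2 s :=
  step (a := 359/256) (b := 45/32) (xa := 1652066597/625000000) (xb := 414136451/156250000) (V := 225337/500000) (S := 562673769/625000000)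
    h1 h2 (by norm_num) (by norm_num)
    (by have := rpow_lb (c := 1652066597/625000000) 1077 768 (by norm_num) (by norm_num) (by rw [pow_split8 _ 768, pow_split8 (2:ℝ) 1077]; norm_num); norm_num at this ⊢; exact this)
    (by have := rpow_ub (c := 414136451/156250000) 1080 768 (by norm_num) (by norm_num) (by rw [pow_split8 _ 768, pow_split8 (2:ℝ) 1080]; norm_num); norm_num at this ⊢; exact this)
    (by norm_num) (by norm_num) (by norm_num) (by norm_num)
    (by norm_num) (by norm_num) (by norm_num) (by norm_num)

lemma I15 {s : ℝ} (h1 : (45/32:ℝ) ≤ s) (h2 : s ≤ (361/256:ℝ)) : 0 ≤ F2 s :=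
  step (a := 45/32) (b := 361/256) (xa := 26504732863/10000000000) (xb := 5315318897/2000000000) (V := 907571/2000000) (S := 2247306893/2500000000)
    h1 h2 (by norm_num) (by norm_num)
    (by have := rpow_lb (c := 26504732863/10000000000) 1080 768 (by norm_num) (by norm_num) (by rw [pow_split8 _ 768, pow_split8 (2:ℝ) 1080]; norm_num); norm_num at this ⊢; exact this)
    (by have := rpow_ub (c := 5315318897/2000000000) 1083 768 (by norm_num) (by norm_num) (by rw [pow_split8 _ 768, pow_split8 (2:ℝ) 1083]; norm_num); norm_num at this ⊢; exact this)
    (by norm_num) (by norm_num) (by norm_num) (by norm_num)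
    (by norm_num) (by norm_num) (by norm_num) (by norm_num)

lemma I16 {s : ℝ} (h1 : (361/256:ℝ) ≤ s) (h2 : s ≤ (181/128:ℝ)) : 0 ≤ F2 s :=
  step (a := 361/256) (b := 181/128) (xa := 6644148621/2500000000) (xb := 13324325471/5000000000) (V := 4568797/10000000) (S := 897566511/1000000000)
    h1 h2 (by norm_num) (by norm_num)
    (by have := rpow_lb (c := 6644148621/2500000000) 1083 768 (by norm_num) (by norm_num) (by rw [pow_split8 _ 768, pow_split8 (2:ℝ) 1083]; norm_num); norm_num at this ⊢; exact this)
    (by have := rpow_ub (c := 13324325471/5000000000) 1086 768 (by norm_num) (by norm_num) (by rw [pow_split8 _ 768, pow_split8 (2:ℝ) 1086]; norm_num); norm_num at this ⊢; exact this)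
    (by norm_num) (by norm_num) (by norm_num) (by norm_num)
    (by norm_num) (by norm_num) (by norm_num) (by norm_num)

lemma I17 {s : ℝ} (h1 : (181/128:ℝ) ≤ s) (h2 : s ≤ (363/256:ℝ)) : 0 ≤ F2 s :=
  step (a := 181/128) (b := 363/256) (xa := 26648650941/10000000000) (xb := 5344180553/2000000000) (V := 287473/625000) (S := 8962093611/10000000000)
    h1 h2 (by norm_num) (by norm_num)
    (by have := rpow_lb (c := 26648650941/10000000000) 1086 768 (by norm_num) (by norm_num) (by rw [pow_split8 _ 768, pow_split8 (2:ℝ) 1086]; norm_num); norm_num at this ⊢; exact this)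
    (by have := rpow_ub (c := 5344180553/2000000000) 1089 768 (by norm_num) (by norm_num) (by rw [pow_split8 _ 768, pow_split8 (2:ℝ) 1089]; norm_num); norm_num at this ⊢; exact this)
    (by norm_num) (by norm_num) (by norm_num) (by norm_num)
    (by norm_num) (by norm_num) (by norm_num) (by norm_num)

lemma I18 {s : ℝ} (h1 : (363/256:ℝ) ≤ s) (h2 : s ≤ (91/64:ℝ)) : 0 ≤ F2 s :=
  step (a := 363/256) (b := 91/64) (xa := 6680225691/2500000000) (xb := 13396675241/5000000000) (V := 463017/1000000) (S := 2237128433/2500000000)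
    h1 h2 (by norm_num) (by norm_num)
    (by have := rpow_lb (c := 6680225691/2500000000) 1089 768 (by norm_num) (by norm_num) (by rw [pow_split8 _ 768, pow_split8 (2:ℝ) 1089]; norm_num); norm_num at this ⊢; exact this)
    (by have := rpow_ub (c := 13396675241/5000000000) 1092 768 (by norm_num) (by norm_num) (by rw [pow_split8 _ 768, pow_split8 (2:ℝ) 1092]; norm_num); norm_num at this ⊢; exact this)
    (by norm_num) (by norm_num) (by norm_num) (by norm_num)
    (by norm_num) (by norm_num) (by norm_num) (by norm_num)

lemma I19 {s : ℝ} (h1 : (91/64:ℝ) ≤ s) (h2 : s ≤ (365/256:ℝ)) : 0 ≤ F2 s :=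
  step (a := 91/64) (b := 365/256) (xa := 26793350481/10000000000) (xb := 209890583/78125000) (V := 4660603/10000000) (S := 2233731749/2500000000)
    h1 h2 (by norm_num) (by norm_num)
    (by have := rpow_lb (c := 26793350481/10000000000) 1092 768 (by norm_num) (by norm_num) (by rw [pow_split8 _ 768, pow_split8 (2:ℝ) 1092]; norm_num); norm_num at this ⊢; exact this)
    (by have := rpow_ub (c := 209890583/78125000) 1095 768 (by norm_num) (by norm_num) (by rw [pow_split8 _ 768, pow_split8 (2:ℝ) 1095]; norm_num); norm_num at this ⊢; exact this)
    (by norm_num) (by norm_num) (by norm_num) (by norm_num)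
    (by norm_num) (by norm_num) (by norm_num) (by norm_num)

lemma I20 {s : ℝ} (h1 : (365/256:ℝ) ≤ s) (h2 : s ≤ (183/128:ℝ)) : 0 ≤ F2 s :=
  step (a := 365/256) (b := 183/128) (xa := 26865994623/10000000000) (xb := 1077553429/400000000) (V := 469087/1000000) (S := 223033339/250000000)
    h1 h2 (by norm_num) (by norm_num)
    (by have := rpow_lb (c := 26865994623/10000000000) 1095 768 (by norm_num) (by norm_num) (by rw [pow_split8 _ 768, pow_split8 (2:ℝ) 1095]; norm_num); norm_num at this ⊢; exact this)
    (by have := rpow_ub (c := 1077553429/400000000) 1098 768 (by norm_num) (by norm_num) (by rw [pow_split8 _ 768, pow_split8 (2:ℝ) 1098]; norm_num); norm_num at this ⊢; exact this)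
    (by norm_num) (by norm_num) (by norm_num) (by norm_num)
    (by norm_num) (by norm_num) (by norm_num) (by norm_num)

lemma I21 {s : ℝ} (h1 : (183/128:ℝ) ≤ s) (h2 : s ≤ (367/256:ℝ)) : 0 ≤ F2 s :=
  step (a := 183/128) (b := 367/256) (xa := 6734708931/2500000000) (xb := 13505937159/5000000000) (V := 4720971/10000000) (S := 4453867449/5000000000)
    h1 h2 (by norm_num) (by norm_num)
    (by have := rpow_lb (c := 6734708931/2500000000) 1098 768 (by norm_num) (by norm_num) (by rw [pow_split8 _ 768, pow_split8 (2:ℝ) 1098]; norm_num); norm_num at this ⊢; exact this)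
    (by have := rpow_ub (c := 13505937159/5000000000) 1101 768 (by norm_num) (by norm_num) (by rw [pow_split8 _ 768, pow_split8 (2:ℝ) 1101]; norm_num); norm_num at this ⊢; exact this)
    (by norm_num) (by norm_num) (by norm_num) (by norm_num)
    (by norm_num) (by norm_num) (by norm_num) (by norm_num)

lemma I22 {s : ℝ} (h1 : (367/256:ℝ) ≤ s) (h2 : s ≤ (23/16:ℝ)) : 0 ≤ F2 s :=
  step (a := 367/256) (b := 23/16) (xa := 27011874317/10000000000) (xb := 27085110939/10000000000) (V := 1187727/2500000) (S := 4447065781/5000000000)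
    h1 h2 (by norm_num) (by norm_num)
    (by have := rpow_lb (c := 27011874317/10000000000) 1101 768 (by norm_num) (by norm_num) (by rw [pow_split8 _ 768, pow_split8 (2:ℝ) 1101]; norm_num); norm_num at this ⊢; exact this)
    (by have := rpow_ub (c := 27085110939/10000000000) 1104 768 (by norm_num) (by norm_num) (by rw [pow_split8 _ 768, pow_split8 (2:ℝ) 1104]; norm_num); norm_num at this ⊢; exact this)
    (by norm_num) (by norm_num) (by norm_num) (by norm_num)
    (by norm_num) (by norm_num) (by norm_num) (by norm_num)

lemma I23 {s : ℝ} (h1 : (23/16:ℝ) ≤ s) (h2 : s ≤ (553/384:ℝ)) : 0 ≤ F2 s :=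
  step (a := 23/16) (b := 553/384) (xa := 13542555469/5000000000) (xb := 13567022817/5000000000) (V := 4780683/10000000) (S := 8880524073/10000000000)
    h1 h2 (by norm_num) (by norm_num)
    (by have := rpow_lb (c := 13542555469/5000000000) 1104 768 (by norm_num) (by norm_num) (by rw [pow_split8 _ 768, pow_split8 (2:ℝ) 1104]; norm_num); norm_num at this ⊢; exact this)
    (by have := rpow_ub (c := 13567022817/5000000000) 1106 768 (by norm_num) (by norm_num) (by rw [pow_split8 _ 768, pow_split8 (2:ℝ) 1106]; norm_num); norm_num at this ⊢; exact this)
    (by norm_num) (by norm_num) (by norm_num) (by norm_num)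
    (by norm_num) (by norm_num) (by norm_num) (by norm_num)

lemma I24 {s : ℝ} (h1 : (553/384:ℝ) ≤ s) (h2 : s ≤ (277/192:ℝ)) : 0 ≤ F2 s :=
  step (a := 553/384) (b := 277/192) (xa := 27134045633/10000000000) (xb := 13591534369/5000000000) (V := 4800443/10000000) (S := 8871450803/10000000000)
    h1 h2 (by norm_num) (by norm_num)
    (by have := rpow_lb (c := 27134045633/10000000000) 1106 768 (by norm_num) (by norm_num) (by rw [pow_split8 _ 768, pow_split8 (2:ℝ) 1106]; norm_num); norm_num at this ⊢; exact this)
    (by have := rpow_ub (c := 13591534369/5000000000) 1108 768 (by norm_num) (by norm_num) (by rw [pow_split8 _ 768, pow_split8 (2:ℝ) 1108]; norm_num); norm_num at this ⊢; exact this)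
    (by norm_num) (by norm_num) (by norm_num) (by norm_num)
    (by norm_num) (by norm_num) (by norm_num) (by norm_num)

lemma I25 {s : ℝ} (h1 : (277/192:ℝ) ≤ s) (h2 : s ≤ (185/128:ℝ)) : 0 ≤ F2 s :=
  step (a := 277/192) (b := 185/128) (xa := 27183068737/10000000000) (xb := 27232180413/10000000000) (V := 1205033/2500000) (S := 4431188133/5000000000)
    h1 h2 (by norm_num) (by norm_num)
    (by have := rpow_lb (c := 27183068737/10000000000) 1108 768 (by norm_num) (by norm_num) (by rw [pow_split8 _ 768, pow_split8 (2:ℝ) 1108]; norm_num); norm_num at this ⊢; exact this)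
    (by have := rpow_ub (c := 27232180413/10000000000) 1110 768 (by norm_num) (by norm_num) (by rw [pow_split8 _ 768, pow_split8 (2:ℝ) 1110]; norm_num); norm_num at this ⊢; exact this)
    (by norm_num) (by norm_num) (by norm_num) (by norm_num)
    (by norm_num) (by norm_num) (by norm_num) (by norm_num)

lemma I26 {s : ℝ} (h1 : (185/128:ℝ) ≤ s) (h2 : s ≤ (139/96:ℝ)) : 0 ≤ F2 s :=
  step (a := 185/128) (b := 139/96) (xa := 6808045103/2500000000) (xb := 13640690409/5000000000) (V := 4839749/10000000) (S := 1106662667/1250000000)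
    h1 h2 (by norm_num) (by norm_num)
    (by have := rpow_lb (c := 6808045103/2500000000) 1110 768 (by norm_num) (by norm_num) (by rw [pow_split8 _ 768, pow_split8 (2:ℝ) 1110]; norm_num); norm_num at this ⊢; exact this)
    (by have := rpow_ub (c := 13640690409/5000000000) 1112 768 (by norm_num) (by norm_num) (by rw [pow_split8 _ 768, pow_split8 (2:ℝ) 1112]; norm_num); norm_num at this ⊢; exact this)
    (by norm_num) (by norm_num) (by norm_num) (by norm_num)
    (by norm_num) (by norm_num) (by norm_num) (by norm_num)

lemma I27 {s : ℝ} (h1 : (139/96:ℝ) ≤ s) (h2 : s ≤ (557/384:ℝ)) : 0 ≤ F2 s :=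
  step (a := 139/96) (b := 557/384) (xa := 27281380817/10000000000) (xb := 13665335057/5000000000) (V := 151853/312500) (S := 2211056373/2500000000)
    h1 h2 (by norm_num) (by norm_num)
    (by have := rpow_lb (c := 27281380817/10000000000) 1112 768 (by norm_num) (by norm_num) (by rw [pow_split8 _ 768, pow_split8 (2:ℝ) 1112]; norm_num); norm_num at this ⊢; exact this)
    (by have := rpow_ub (c := 13665335057/5000000000) 1114 768 (by norm_num) (by norm_num) (by rw [pow_split8 _ 768, pow_split8 (2:ℝ) 1114]; norm_num); norm_num at this ⊢; exact this)
    (by norm_num) (by norm_num) (by norm_num) (by norm_num)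
    (by norm_num) (by norm_num) (by norm_num) (by norm_num)

lemma I28 {s : ℝ} (h1 : (557/384:ℝ) ≤ s) (h2 : s ≤ (93/64:ℝ)) : 0 ≤ F2 s :=
  step (a := 557/384) (b := 93/64) (xa := 27330670113/10000000000) (xb := 1369002423/500000000) (V := 4878773/10000000) (S := 8835149133/10000000000)
    h1 h2 (by norm_num) (by norm_num)
    (by have := rpow_lb (c := 27330670113/10000000000) 1114 768 (by norm_num) (by norm_num) (by rw [pow_split8 _ 768, pow_split8 (2:ℝ) 1114]; norm_num); norm_num at this ⊢; exact this)
    (by have := rpow_ub (c := 1369002423/500000000) 1116 768 (by norm_num) (by norm_num) (by rw [pow_split8 _ 768, pow_split8 (2:ℝ) 1116]; norm_num); norm_num at this ⊢; exact this)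
    (by norm_num) (by norm_num) (by norm_num) (by norm_num)
    (by norm_num) (by norm_num) (by norm_num) (by norm_num)

lemma I29 {s : ℝ} (h1 : (93/64:ℝ) ≤ s) (h2 : s ≤ (559/384:ℝ)) : 0 ≤ F2 s :=
  step (a := 93/64) (b := 559/384) (xa := 27380048459/10000000000) (xb := 13714758009/5000000000) (V := 4898181/10000000) (S := 8826072187/10000000000)
    h1 h2 (by norm_num) (by norm_num)
    (by have := rpow_lb (c := 27380048459/10000000000) 1116 768 (by norm_num) (by norm_num) (by rw [pow_split8 _ 768, pow_split8 (2:ℝ) 1116]; norm_num); norm_num at this ⊢; exact this)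
    (by have := rpow_ub (c := 13714758009/5000000000) 1118 768 (by norm_num) (by norm_num) (by rw [pow_split8 _ 768, pow_split8 (2:ℝ) 1118]; norm_num); norm_num at this ⊢; exact this)
    (by norm_num) (by norm_num) (by norm_num) (by norm_num)
    (by norm_num) (by norm_num) (by norm_num) (by norm_num)

lemma I30 {s : ℝ} (h1 : (559/384:ℝ) ≤ s) (h2 : s ≤ (1121/768:ℝ)) : 0 ≤ F2 s :=
  step (a := 559/384) (b := 1121/768) (xa := 27429516017/10000000000) (xb := 27503884981/10000000000) (V := 2458759/5000000) (S := 1763399197/2000000000)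
    h1 h2 (by norm_num) (by norm_num)
    (by have := rpow_lb (c := 27429516017/10000000000) 1118 768 (by norm_num) (by norm_num) (by rw [pow_split8 _ 768, pow_split8 (2:ℝ) 1118]; norm_num); norm_num at this ⊢; exact this)
    (by have := rpow_ub (c := 27503884981/10000000000) 1121 768 (by norm_num) (by norm_num) (by rw [pow_split8 _ 768, pow_split8 (2:ℝ) 1121]; norm_num); norm_num at this ⊢; exact this)
    (by norm_num) (by norm_num) (by norm_num) (by norm_num)
    (by norm_num) (by norm_num) (by norm_num) (by norm_num)

lemma I31 {s : ℝ} (h1 : (1121/768:ℝ) ≤ s) (h2 : s ≤ (281/192:ℝ)) : 0 ≤ F2 s :=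
  step (a := 1121/768) (b := 281/192) (xa := 1375194249/500000000) (xb := 13789227789/5000000000) (V := 989279/2000000) (S := 3438821/3906250)
    h1 h2 (by norm_num) (by norm_num)
    (by have := rpow_lb (c := 1375194249/500000000) 1121 768 (by norm_num) (by norm_num) (by rw [pow_split8 _ 768, pow_split8 (2:ℝ) 1121]; norm_num); norm_num at this ⊢; exact this)
    (by have := rpow_ub (c := 13789227789/5000000000) 1124 768 (by norm_num) (by norm_num) (by rw [pow_split8 _ 768, pow_split8 (2:ℝ) 1124]; norm_num); norm_num at this ⊢; exact this)
    (by norm_num) (by norm_num) (by norm_num) (by norm_num)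
    (by norm_num) (by norm_num) (by norm_num) (by norm_num)

lemma I32 {s : ℝ} (h1 : (281/192:ℝ) ≤ s) (h2 : s ≤ (1127/768:ℝ)) : 0 ≤ F2 s :=
  step (a := 281/192) (b := 1127/768) (xa := 27578455577/10000000000) (xb := 6913307089/2500000000) (V := 4975119/10000000) (S := 8789768207/10000000000)
    h1 h2 (by norm_num) (by norm_num)
    (by have := rpow_lb (c := 27578455577/10000000000) 1124 768 (by norm_num) (by norm_num) (by rw [pow_split8 _ 768, pow_split8 (2:ℝ) 1124]; norm_num); norm_num at this ⊢; exact this)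
    (by have := rpow_ub (c := 6913307089/2500000000) 1127 768 (by norm_num) (by norm_num) (by rw [pow_split8 _ 768, pow_split8 (2:ℝ) 1127]; norm_num); norm_num at this ⊢; exact this)
    (by norm_num) (by norm_num) (by norm_num) (by norm_num)
    (by norm_num) (by norm_num) (by norm_num) (by norm_num)

lemma I33 {s : ℝ} (h1 : (1127/768:ℝ) ≤ s) (h2 : s ≤ (565/384:ℝ)) : 0 ≤ F2 s :=
  step (a := 1127/768) (b := 565/384) (xa := 5530645671/2000000000) (xb := 3466025483/1250000000) (V := 5003689/10000000) (S := 8776157077/10000000000)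
    h1 h2 (by norm_num) (by norm_num)
    (by have := rpow_lb (c := 5530645671/2000000000) 1127 768 (by norm_num) (by norm_num) (by rw [pow_split8 _ 768, pow_split8 (2:ℝ) 1127]; norm_num); norm_num at this ⊢; exact this)
    (by have := rpow_ub (c := 3466025483/1250000000) 1130 768 (by norm_num) (by norm_num) (by rw [pow_split8 _ 768, pow_split8 (2:ℝ) 1130]; norm_num); norm_num at this ⊢; exact this)
    (by norm_num) (by norm_num) (by norm_num) (by norm_num)
    (by norm_num) (by norm_num) (by norm_num) (by norm_num)

lemma I34 {s : ℝ} (h1 : (565/384:ℝ) ≤ s) (h2 : s ≤ (1133/768:ℝ)) : 0 ≤ F2 s :=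
  step (a := 565/384) (b := 1133/768) (xa := 27728203863/10000000000) (xb := 6950845663/2500000000) (V := 5032107/10000000) (S := 8762548683/10000000000)
    h1 h2 (by norm_num) (by norm_num)
    (by have := rpow_lb (c := 27728203863/10000000000) 1130 768 (by norm_num) (by norm_num) (by rw [pow_split8 _ 768, pow_split8 (2:ℝ) 1130]; norm_num); norm_num at this ⊢; exact this)
    (by have := rpow_ub (c := 6950845663/2500000000) 1133 768 (by norm_num) (by norm_num) (by rw [pow_split8 _ 768, pow_split8 (2:ℝ) 1133]; norm_num); norm_num at this ⊢; exact this)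
    (by norm_num) (by norm_num) (by norm_num) (by norm_num)
    (by norm_num) (by norm_num) (by norm_num) (by norm_num)

lemma I35 {s : ℝ} (h1 : (1133/768:ℝ) ≤ s) (h2 : s ≤ (71/48:ℝ)) : 0 ≤ F2 s :=
  step (a := 1133/768) (b := 71/48) (xa := 27803382651/10000000000) (xb := 27878765269/10000000000) (V := 40483/80000) (S := 4374471653/5000000000)
    h1 h2 (by norm_num) (by norm_num)
    (by have := rpow_lb (c := 27803382651/10000000000) 1133 768 (by norm_num) (by norm_num) (by rw [pow_split8 _ 768, pow_split8 (2:ℝ) 1133]; norm_num); norm_num at this ⊢; exact this)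
    (by have := rpow_ub (c := 27878765269/10000000000) 1136 768 (by norm_num) (by norm_num) (by rw [pow_split8 _ 768, pow_split8 (2:ℝ) 1136]; norm_num); norm_num at this ⊢; exact this)
    (by norm_num) (by norm_num) (by norm_num) (by norm_num)
    (by norm_num) (by norm_num) (by norm_num) (by norm_num)

lemma I36 {s : ℝ} (h1 : (71/48:ℝ) ≤ s) (h2 : s ≤ (1139/768:ℝ)) : 0 ≤ F2 s :=
  step (a := 71/48) (b := 1139/768) (xa := 6969691317/2500000000) (xb := 2795435227/1000000000) (V := 2544247/5000000) (S := 8735341687/10000000000)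
    h1 h2 (by norm_num) (by norm_num)
    (by have := rpow_lb (c := 6969691317/2500000000) 1136 768 (by norm_num) (by norm_num) (by rw [pow_split8 _ 768, pow_split8 (2:ℝ) 1136]; norm_num); norm_num at this ⊢; exact this)
    (by have := rpow_ub (c := 2795435227/1000000000) 1139 768 (by norm_num) (by norm_num) (by rw [pow_split8 _ 768, pow_split8 (2:ℝ) 1139]; norm_num); norm_num at this ⊢; exact this)
    (by norm_num) (by norm_num) (by norm_num) (by norm_num)
    (by norm_num) (by norm_num) (by norm_num) (by norm_num)

lemma I37 {s : ℝ} (h1 : (1139/768:ℝ) ≤ s) (h2 : s ≤ (571/384:ℝ)) : 0 ≤ F2 s :=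
  step (a := 1139/768) (b := 571/384) (xa := 27954352269/10000000000) (xb := 1751884013/625000000) (V := 319779/625000) (S := 8721745033/10000000000)
    h1 h2 (by norm_num) (by norm_num)
    (by have := rpow_lb (c := 27954352269/10000000000) 1139 768 (by norm_num) (by norm_num) (by rw [pow_split8 _ 768, pow_split8 (2:ℝ) 1139]; norm_num); norm_num at this ⊢; exact this)
    (by have := rpow_ub (c := 1751884013/625000000) 1142 768 (by norm_num) (by norm_num) (by rw [pow_split8 _ 768, pow_split8 (2:ℝ) 1142]; norm_num); norm_num at this ⊢; exact this)
    (by norm_num) (by norm_num) (by norm_num) (by norm_num)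
    (by norm_num) (by norm_num) (by norm_num) (by norm_num)

lemma I38 {s : ℝ} (h1 : (571/384:ℝ) ≤ s) (h2 : s ≤ (1145/768:ℝ)) : 0 ≤ F2 s :=
  step (a := 571/384) (b := 1145/768) (xa := 28030144207/10000000000) (xb := 28106141639/10000000000) (V := 160759/312500) (S := 8708153073/10000000000)
    h1 h2 (by norm_num) (by norm_num)
    (by have := rpow_lb (c := 28030144207/10000000000) 1142 768 (by norm_num) (by norm_num) (by rw [pow_split8 _ 768, pow_split8 (2:ℝ) 1142]; norm_num); norm_num at this ⊢; exact this)
    (by have := rpow_ub (c := 28106141639/10000000000) 1145 768 (by norm_num) (by norm_num) (by rw [pow_split8 _ 768, pow_split8 (2:ℝ) 1145]; norm_num); norm_num at this ⊢; exact this)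
    (by norm_num) (by norm_num) (by norm_num) (by norm_num)
    (by norm_num) (by norm_num) (by norm_num) (by norm_num)

lemma I39 {s : ℝ} (h1 : (1145/768:ℝ) ≤ s) (h2 : s ≤ (287/192:ℝ)) : 0 ≤ F2 s :=
  step (a := 1145/768) (b := 287/192) (xa := 14053070819/5000000000) (xb := 28182345119/10000000000) (V := 1034393/2000000) (S := 8694567469/10000000000)
    h1 h2 (by norm_num) (by norm_num)
    (by have := rpow_lb (c := 14053070819/5000000000) 1145 768 (by norm_num) (by norm_num) (by rw [pow_split8 _ 768, pow_split8 (2:ℝ) 1145]; norm_num); norm_num at this ⊢; exact this)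
    (by have := rpow_ub (c := 28182345119/10000000000) 1148 768 (by norm_num) (by norm_num) (by rw [pow_split8 _ 768, pow_split8 (2:ℝ) 1148]; norm_num); norm_num at this ⊢; exact this)
    (by norm_num) (by norm_num) (by norm_num) (by norm_num)
    (by norm_num) (by norm_num) (by norm_num) (by norm_num)

lemma I40 {s : ℝ} (h1 : (287/192:ℝ) ≤ s) (h2 : s ≤ (1151/768:ℝ)) : 0 ≤ F2 s :=
  step (a := 287/192) (b := 1151/768) (xa := 14091172559/5000000000) (xb := 3532344401/1250000000) (V := 2599749/5000000) (S := 4340493951/5000000000)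
    h1 h2 (by norm_num) (by norm_num)
    (by have := rpow_lb (c := 14091172559/5000000000) 1148 768 (by norm_num) (by norm_num) (by rw [pow_split8 _ 768, pow_split8 (2:ℝ) 1148]; norm_num); norm_num at this ⊢; exact this)
    (by have := rpow_ub (c := 3532344401/1250000000) 1151 768 (by norm_num) (by norm_num) (by rw [pow_split8 _ 768, pow_split8 (2:ℝ) 1151]; norm_num); norm_num at this ⊢; exact this)
    (by norm_num) (by norm_num) (by norm_num) (by norm_num)
    (by norm_num) (by norm_num) (by norm_num) (by norm_num)

lemma I41 {s : ℝ} (h1 : (1151/768:ℝ) ≤ s) (h2 : s ≤ (577/384:ℝ)) : 0 ≤ F2 s :=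
  step (a := 1151/768) (b := 577/384) (xa := 28258755207/10000000000) (xb := 14167686233/5000000000) (V := 653361/1250000) (S := 4333707507/5000000000)
    h1 h2 (by norm_num) (by norm_num)
    (by have := rpow_lb (c := 28258755207/10000000000) 1151 768 (by norm_num) (by norm_num) (by rw [pow_split8 _ 768, pow_split8 (2:ℝ) 1151]; norm_num); norm_num at this ⊢; exact this)
    (by have := rpow_ub (c := 14167686233/5000000000) 1154 768 (by norm_num) (by norm_num) (by rw [pow_split8 _ 768, pow_split8 (2:ℝ) 1154]; norm_num); norm_num at this ⊢; exact this)
    (by norm_num) (by norm_num) (by norm_num) (by norm_num)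
    (by norm_num) (by norm_num) (by norm_num) (by norm_num)

lemma I42 {s : ℝ} (h1 : (577/384:ℝ) ≤ s) (h2 : s ≤ (1157/768:ℝ)) : 0 ≤ F2 s :=
  step (a := 577/384) (b := 1157/768) (xa := 5667074493/2000000000) (xb := 5682439491/2000000000) (V := 1050827/2000000) (S := 4326924963/5000000000)
    h1 h2 (by norm_num) (by norm_num)
    (by have := rpow_lb (c := 5667074493/2000000000) 1154 768 (by norm_num) (by norm_num) (by rw [pow_split8 _ 768, pow_split8 (2:ℝ) 1154]; norm_num); norm_num at this ⊢; exact this)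
    (by have := rpow_ub (c := 5682439491/2000000000) 1157 768 (by norm_num) (by norm_num) (by rw [pow_split8 _ 768, pow_split8 (2:ℝ) 1157]; norm_num); norm_num at this ⊢; exact this)
    (by norm_num) (by norm_num) (by norm_num) (by norm_num)
    (by norm_num) (by norm_num) (by norm_num) (by norm_num)

lemma I43 {s : ℝ} (h1 : (1157/768:ℝ) ≤ s) (h2 : s ≤ (145/96:ℝ)) : 0 ≤ F2 s :=
  step (a := 1157/768) (b := 145/96) (xa := 14206098727/5000000000) (xb := 28489230737/10000000000) (V := 5281241/10000000) (S := 8640292749/10000000000)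
    h1 h2 (by norm_num) (by norm_num)
    (by have := rpow_lb (c := 14206098727/5000000000) 1157 768 (by norm_num) (by norm_num) (by rw [pow_split8 _ 768, pow_split8 (2:ℝ) 1157]; norm_num); norm_num at this ⊢; exact this)
    (by have := rpow_ub (c := 28489230737/10000000000) 1160 768 (by norm_num) (by norm_num) (by rw [pow_split8 _ 768, pow_split8 (2:ℝ) 1160]; norm_num); norm_num at this ⊢; exact this)
    (by norm_num) (by norm_num) (by norm_num) (by norm_num)
    (by norm_num) (by norm_num) (by norm_num) (by norm_num)

lemma I44 {s : ℝ} (h1 : (145/96:ℝ) ≤ s) (h2 : s ≤ (1163/768:ℝ)) : 0 ≤ F2 s :=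
  step (a := 145/96) (b := 1163/768) (xa := 1780576921/625000000) (xb := 28566472877/10000000000) (V := 5308207/10000000) (S := 8626744069/10000000000)
    h1 h2 (by norm_num) (by norm_num)
    (by have := rpow_lb (c := 1780576921/625000000) 1160 768 (by norm_num) (by norm_num) (by rw [pow_split8 _ 768, pow_split8 (2:ℝ) 1160]; norm_num); norm_num at this ⊢; exact this)
    (by have := rpow_ub (c := 28566472877/10000000000) 1163 768 (by norm_num) (by norm_num) (by rw [pow_split8 _ 768, pow_split8 (2:ℝ) 1163]; norm_num); norm_num at this ⊢; exact this)
    (by norm_num) (by norm_num) (by norm_num) (by norm_num)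
    (by norm_num) (by norm_num) (by norm_num) (by norm_num)

lemma I45 {s : ℝ} (h1 : (1163/768:ℝ) ≤ s) (h2 : s ≤ (389/256:ℝ)) : 0 ≤ F2 s :=
  step (a := 1163/768) (b := 389/256) (xa := 7141618219/2500000000) (xb := 7167447067/2500000000) (V := 5335033/10000000) (S := 8613204963/10000000000)
    h1 h2 (by norm_num) (by norm_num)
    (by have := rpow_lb (c := 7141618219/2500000000) 1163 768 (by norm_num) (by norm_num) (by rw [pow_split8 _ 768, pow_split8 (2:ℝ) 1163]; norm_num); norm_num at this ⊢; exact this)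
    (by have := rpow_ub (c := 7167447067/2500000000) 1167 768 (by norm_num) (by norm_num) (by rw [pow_split8 _ 768, pow_split8 (2:ℝ) 1167]; norm_num); norm_num at this ⊢; exact this)
    (by norm_num) (by norm_num) (by norm_num) (by norm_num)
    (by norm_num) (by norm_num) (by norm_num) (by norm_num)

lemma I46 {s : ℝ} (h1 : (389/256:ℝ) ≤ s) (h2 : s ≤ (1171/768:ℝ)) : 0 ≤ F2 s :=
  step (a := 389/256) (b := 1171/768) (xa := 28669788267/10000000000) (xb := 7193369329/2500000000) (V := 5370587/10000000) (S := 8595167639/10000000000)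
    h1 h2 (by norm_num) (by norm_num)
    (by have := rpow_lb (c := 28669788267/10000000000) 1167 768 (by norm_num) (by norm_num) (by rw [pow_split8 _ 768, pow_split8 (2:ℝ) 1167]; norm_num); norm_num at this ⊢; exact this)
    (by have := rpow_ub (c := 7193369329/2500000000) 1171 768 (by norm_num) (by norm_num) (by rw [pow_split8 _ 768, pow_split8 (2:ℝ) 1171]; norm_num); norm_num at this ⊢; exact this)
    (by norm_num) (by norm_num) (by norm_num) (by norm_num)
    (by norm_num) (by norm_num) (by norm_num) (by norm_num)

lemma I47 {s : ℝ} (h1 : (1171/768:ℝ) ≤ s) (h2 : s ≤ (1175/768:ℝ)) : 0 ≤ F2 s :=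
  step (a := 1171/768) (b := 1175/768) (xa := 5754695463/2000000000) (xb := 7219385343/2500000000) (V := 5405899/10000000) (S := 4288574097/5000000000)
    h1 h2 (by norm_num) (by norm_num)
    (by have := rpow_lb (c := 5754695463/2000000000) 1171 768 (by norm_num) (by norm_num) (by rw [pow_split8 _ 768, pow_split8 (2:ℝ) 1171]; norm_num); norm_num at this ⊢; exact this)
    (by have := rpow_ub (c := 7219385343/2500000000) 1175 768 (by norm_num) (by norm_num) (by rw [pow_split8 _ 768, pow_split8 (2:ℝ) 1175]; norm_num); norm_num at this ⊢; exact this)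
    (by norm_num) (by norm_num) (by norm_num) (by norm_num)
    (by norm_num) (by norm_num) (by norm_num) (by norm_num)

lemma I48 {s : ℝ} (h1 : (1175/768:ℝ) ≤ s) (h2 : s ≤ (393/256:ℝ)) : 0 ≤ F2 s :=
  step (a := 1175/768) (b := 393/256) (xa := 28877541371/10000000000) (xb := 28981981793/10000000000) (V := 5440969/10000000) (S := 4279574527/5000000000)
    h1 h2 (by norm_num) (by norm_num)
    (by have := rpow_lb (c := 28877541371/10000000000) 1175 768 (by norm_num) (by norm_num) (by rw [pow_split8 _ 768, pow_split8 (2:ℝ) 1175]; norm_num); norm_num at this ⊢; exact this)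
    (by have := rpow_ub (c := 28981981793/10000000000) 1179 768 (by norm_num) (by norm_num) (by rw [pow_split8 _ 768, pow_split8 (2:ℝ) 1179]; norm_num); norm_num at this ⊢; exact this)
    (by norm_num) (by norm_num) (by norm_num) (by norm_num)
    (by norm_num) (by norm_num) (by norm_num) (by norm_num)

lemma I49 {s : ℝ} (h1 : (393/256:ℝ) ≤ s) (h2 : s ≤ (1183/768:ℝ)) : 0 ≤ F2 s :=
  step (a := 393/256) (b := 1183/768) (xa := 905686931/312500000) (xb := 29086799941/10000000000) (V := 2737901/5000000) (S := 8541170029/10000000000)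
    h1 h2 (by norm_num) (by norm_num)
    (by have := rpow_lb (c := 905686931/312500000) 1179 768 (by norm_num) (by norm_num) (by rw [pow_split8 _ 768, pow_split8 (2:ℝ) 1179]; norm_num); norm_num at this ⊢; exact this)
    (by have := rpow_ub (c := 29086799941/10000000000) 1183 768 (by norm_num) (by norm_num) (by rw [pow_split8 _ 768, pow_split8 (2:ℝ) 1183]; norm_num); norm_num at this ⊢; exact this)
    (by norm_num) (by norm_num) (by norm_num) (by norm_num)
    (by norm_num) (by norm_num) (by norm_num) (by norm_num)

lemma I50 {s : ℝ} (h1 : (1183/768:ℝ) ≤ s) (h2 : s ≤ (1187/768:ℝ)) : 0 ≤ F2 s :=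
  step (a := 1183/768) (b := 1187/768) (xa := 1454339997/500000000) (xb := 1459599859/500000000) (V := 1722/3125) (S := 4261606207/5000000000)
    h1 h2 (by norm_num) (by norm_num)
    (by have := rpow_lb (c := 1454339997/500000000) 1183 768 (by norm_num) (by norm_num) (by rw [pow_split8 _ 768, pow_split8 (2:ℝ) 1183]; norm_num); norm_num at this ⊢; exact this)
    (by have := rpow_ub (c := 1459599859/500000000) 1187 768 (by norm_num) (by norm_num) (by rw [pow_split8 _ 768, pow_split8 (2:ℝ) 1187]; norm_num); norm_num at this ⊢; exact this)
    (by norm_num) (by norm_num) (by norm_num) (by norm_num)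
    (by norm_num) (by norm_num) (by norm_num) (by norm_num)

lemma I51 {s : ℝ} (h1 : (1187/768:ℝ) ≤ s) (h2 : s ≤ (149/96:ℝ)) : 0 ≤ F2 s :=
  step (a := 1187/768) (b := 149/96) (xa := 29191997179/10000000000) (xb := 14662014459/5000000000) (V := 1386191/2500000) (S := 340211119/400000000)
    h1 h2 (by norm_num) (by norm_num)
    (by have := rpow_lb (c := 29191997179/10000000000) 1187 768 (by norm_num) (by norm_num) (by rw [pow_split8 _ 768, pow_split8 (2:ℝ) 1187]; norm_num); norm_num at this ⊢; exact this)
    (by have := rpow_ub (c := 14662014459/5000000000) 1192 768 (by norm_num) (by norm_num) (by rw [pow_split8 _ 768, pow_split8 (2:ℝ) 1192]; norm_num); norm_num at this ⊢; exact this)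
    (by norm_num) (by norm_num) (by norm_num) (by norm_num)
    (by norm_num) (by norm_num) (by norm_num) (by norm_num)

lemma I52 {s : ℝ} (h1 : (149/96:ℝ) ≤ s) (h2 : s ≤ (399/256:ℝ)) : 0 ≤ F2 s :=
  step (a := 149/96) (b := 399/256) (xa := 29324028917/10000000000) (xb := 14728328909/5000000000) (V := 1117479/2000000) (S := 8482893297/10000000000)
    h1 h2 (by norm_num) (by norm_num)
    (by have := rpow_lb (c := 29324028917/10000000000) 1192 768 (by norm_num) (by norm_num) (by rw [pow_split8 _ 768, pow_split8 (2:ℝ) 1192]; norm_num); norm_num at this ⊢; exact this)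
    (by have := rpow_ub (c := 14728328909/5000000000) 1197 768 (by norm_num) (by norm_num) (by rw [pow_split8 _ 768, pow_split8 (2:ℝ) 1197]; norm_num); norm_num at this ⊢; exact this)
    (by norm_num) (by norm_num) (by norm_num) (by norm_num)
    (by norm_num) (by norm_num) (by norm_num) (by norm_num)

lemma I53 {s : ℝ} (h1 : (399/256:ℝ) ≤ s) (h2 : s ≤ (601/384:ℝ)) : 0 ≤ F2 s :=
  step (a := 399/256) (b := 601/384) (xa := 29456657817/10000000000) (xb := 14794943291/5000000000) (V := 5629669/10000000) (S := 8460548123/10000000000)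
    h1 h2 (by norm_num) (by norm_num)
    (by have := rpow_lb (c := 29456657817/10000000000) 1197 768 (by norm_num) (by norm_num) (by rw [pow_split8 _ 768, pow_split8 (2:ℝ) 1197]; norm_num); norm_num at this ⊢; exact this)
    (by have := rpow_ub (c := 14794943291/5000000000) 1202 768 (by norm_num) (by norm_num) (by rw [pow_split8 _ 768, pow_split8 (2:ℝ) 1202]; norm_num); norm_num at this ⊢; exact this)
    (by norm_num) (by norm_num) (by norm_num) (by norm_num)
    (by norm_num) (by norm_num) (by norm_num) (by norm_num)

lemma I54 {s : ℝ} (h1 : (601/384:ℝ) ≤ s) (h2 : s ≤ (151/96:ℝ)) : 0 ≤ F2 s :=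
  step (a := 601/384) (b := 151/96) (xa := 29589886581/10000000000) (xb := 1487527837/500000000) (V := 708949/1250000) (S := 2109560869/2500000000)
    h1 h2 (by norm_num) (by norm_num)
    (by have := rpow_lb (c := 29589886581/10000000000) 1202 768 (by norm_num) (by norm_num) (by rw [pow_split8 _ 768, pow_split8 (2:ℝ) 1202]; norm_num); norm_num at this ⊢; exact this)
    (by have := rpow_ub (c := 1487527837/500000000) 1208 768 (by norm_num) (by norm_num) (by rw [pow_split8 _ 768, pow_split8 (2:ℝ) 1208]; norm_num); norm_num at this ⊢; exact this)
    (by norm_num) (by norm_num) (by norm_num) (by norm_num)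
    (by norm_num) (by norm_num) (by norm_num) (by norm_num)

lemma I55 {s : ℝ} (h1 : (151/96:ℝ) ≤ s) (h2 : s ≤ (607/384:ℝ)) : 0 ≤ F2 s :=
  step (a := 151/96) (b := 607/384) (xa := 29750556739/10000000000) (xb := 29912099321/10000000000) (V := 2860721/5000000) (S := 4205767051/5000000000)
    h1 h2 (by norm_num) (by norm_num)
    (by have := rpow_lb (c := 29750556739/10000000000) 1208 768 (by norm_num) (by norm_num) (by rw [pow_split8 _ 768, pow_split8 (2:ℝ) 1208]; norm_num); norm_num at this ⊢; exact this)
    (by have := rpow_ub (c := 29912099321/10000000000) 1214 768 (by norm_num) (by norm_num) (by rw [pow_split8 _ 768, pow_split8 (2:ℝ) 1214]; norm_num); norm_num at this ⊢; exact this)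
    (by norm_num) (by norm_num) (by norm_num) (by norm_num)
    (by norm_num) (by norm_num) (by norm_num) (by norm_num)

lemma I56 {s : ℝ} (h1 : (607/384:ℝ) ≤ s) (h2 : s ≤ (305/192:ℝ)) : 0 ≤ F2 s :=
  step (a := 607/384) (b := 305/192) (xa := 747802483/250000000) (xb := 30074519063/10000000000) (V := 5770799/10000000) (S := 1048111153/1250000000)
    h1 h2 (by norm_num) (by norm_num)
    (by have := rpow_lb (c := 747802483/250000000) 1214 768 (by norm_num) (by norm_num) (by rw [pow_split8 _ 768, pow_split8 (2:ℝ) 1214]; norm_num); norm_num at this ⊢; exact this)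
    (by have := rpow_ub (c := 30074519063/10000000000) 1220 768 (by norm_num) (by norm_num) (by rw [pow_split8 _ 768, pow_split8 (2:ℝ) 1220]; norm_num); norm_num at this ⊢; exact this)
    (by norm_num) (by norm_num) (by norm_num) (by norm_num)
    (by norm_num) (by norm_num) (by norm_num) (by norm_num)

lemma I57 {s : ℝ} (h1 : (305/192:ℝ) ≤ s) (h2 : s ≤ (409/256:ℝ)) : 0 ≤ F2 s :=
  step (a := 305/192) (b := 409/256) (xa := 15037259531/5000000000) (xb := 24212099/8000000) (V := 581967/1000000) (S := 334332471/400000000)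
    h1 h2 (by norm_num) (by norm_num)
    (by have := rpow_lb (c := 15037259531/5000000000) 1220 768 (by norm_num) (by norm_num) (by rw [pow_split8 _ 768, pow_split8 (2:ℝ) 1220]; norm_num); norm_num at this ⊢; exact this)
    (by have := rpow_ub (c := 24212099/8000000) 1227 768 (by norm_num) (by norm_num) (by rw [pow_split8 _ 768, pow_split8 (2:ℝ) 1227]; norm_num); norm_num at this ⊢; exact this)
    (by norm_num) (by norm_num) (by norm_num) (by norm_num)
    (by norm_num) (by norm_num) (by norm_num) (by norm_num)

lemma I58 {s : ℝ} (h1 : (409/256:ℝ) ≤ s) (h2 : s ≤ (617/384:ℝ)) : 0 ≤ F2 s :=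
  step (a := 409/256) (b := 617/384) (xa := 30265123749/10000000000) (xb := 30456936441/10000000000) (V := 2938041/5000000) (S := 2081848297/2500000000)
    h1 h2 (by norm_num) (by norm_num)
    (by have := rpow_lb (c := 30265123749/10000000000) 1227 768 (by norm_num) (by norm_num) (by rw [pow_split8 _ 768, pow_split8 (2:ℝ) 1227]; norm_num); norm_num at this ⊢; exact this)
    (by have := rpow_ub (c := 30456936441/10000000000) 1234 768 (by norm_num) (by norm_num) (by rw [pow_split8 _ 768, pow_split8 (2:ℝ) 1234]; norm_num); norm_num at this ⊢; exact this)
    (by norm_num) (by norm_num) (by norm_num) (by norm_num)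
    (by norm_num) (by norm_num) (by norm_num) (by norm_num)

lemma I59 {s : ℝ} (h1 : (617/384:ℝ) ≤ s) (h2 : s ≤ (207/128:ℝ)) : 0 ≤ F2 s :=
  step (a := 617/384) (b := 207/128) (xa := 761423411/250000000) (xb := 30677639957/10000000000) (V := 1186371/2000000) (S := 8296573017/10000000000)
    h1 h2 (by norm_num) (by norm_num)
    (by have := rpow_lb (c := 761423411/250000000) 1234 768 (by norm_num) (by norm_num) (by rw [pow_split8 _ 768, pow_split8 (2:ℝ) 1234]; norm_num); norm_num at this ⊢; exact this)
    (by have := rpow_ub (c := 30677639957/10000000000) 1242 768 (by norm_num) (by norm_num) (by rw [pow_split8 _ 768, pow_split8 (2:ℝ) 1242]; norm_num); norm_num at this ⊢; exact this)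
    (by norm_num) (by norm_num) (by norm_num) (by norm_num)
    (by norm_num) (by norm_num) (by norm_num) (by norm_num)

lemma I60 {s : ℝ} (h1 : (207/128:ℝ) ≤ s) (h2 : s ≤ (417/256:ℝ)) : 0 ≤ F2 s :=
  step (a := 207/128) (b := 417/256) (xa := 7669409989/2500000000) (xb := 30927843663/10000000000) (V := 239793/400000) (S := 258171137/312500000)
    h1 h2 (by norm_num) (by norm_num)
    (by have := rpow_lb (c := 7669409989/2500000000) 1242 768 (by norm_num) (by norm_num) (by rw [pow_split8 _ 768, pow_split8 (2:ℝ) 1242]; norm_num); norm_num at this ⊢; exact this)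
    (by have := rpow_ub (c := 30927843663/10000000000) 1251 768 (by norm_num) (by norm_num) (by rw [pow_split8 _ 768, pow_split8 (2:ℝ) 1251]; norm_num); norm_num at this ⊢; exact this)
    (by norm_num) (by norm_num) (by norm_num) (by norm_num)
    (by norm_num) (by norm_num) (by norm_num) (by norm_num)

lemma I61 {s : ℝ} (h1 : (417/256:ℝ) ≤ s) (h2 : s ≤ (105/64:ℝ)) : 0 ≤ F2 s :=
  step (a := 417/256) (b := 105/64) (xa := 15463921831/5000000000) (xb := 6236017601/2000000000) (V := 6064703/10000000) (S := 8222159893/10000000000)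
    h1 h2 (by norm_num) (by norm_num)
    (by have := rpow_lb (c := 15463921831/5000000000) 1251 768 (by norm_num) (by norm_num) (by rw [pow_split8 _ 768, pow_split8 (2:ℝ) 1251]; norm_num); norm_num at this ⊢; exact this)
    (by have := rpow_ub (c := 6236017601/2000000000) 1260 768 (by norm_num) (by norm_num) (by rw [pow_split8 _ 768, pow_split8 (2:ℝ) 1260]; norm_num); norm_num at this ⊢; exact this)
    (by norm_num) (by norm_num) (by norm_num) (by norm_num)
    (by norm_num) (by norm_num) (by norm_num) (by norm_num)

lemma I62 {s : ℝ} (h1 : (105/64:ℝ) ≤ s) (h2 : s ≤ (635/384:ℝ)) : 0 ≤ F2 s :=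
  step (a := 105/64) (b := 635/384) (xa := 7795022001/2500000000) (xb := 15731386541/5000000000) (V := 383349/625000) (S := 511439129/625000000)
    h1 h2 (by norm_num) (by norm_num)
    (by have := rpow_lb (c := 7795022001/2500000000) 1260 768 (by norm_num) (by norm_num) (by rw [pow_split8 _ 768, pow_split8 (2:ℝ) 1260]; norm_num); norm_num at this ⊢; exact this)
    (by have := rpow_ub (c := 15731386541/5000000000) 1270 768 (by norm_num) (by norm_num) (by rw [pow_split8 _ 768, pow_split8 (2:ℝ) 1270]; norm_num); norm_num at this ⊢; exact this)
    (by norm_num) (by norm_num) (by norm_num) (by norm_num)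
    (by norm_num) (by norm_num) (by norm_num) (by norm_num)

lemma I63 {s : ℝ} (h1 : (635/384:ℝ) ≤ s) (h2 : s ≤ (427/256:ℝ)) : 0 ≤ F2 s :=
  step (a := 635/384) (b := 427/256) (xa := 31462773081/10000000000) (xb := 31776687687/10000000000) (V := 6208973/10000000) (S := 813976713/1000000000)
    h1 h2 (by norm_num) (by norm_num)
    (by have := rpow_lb (c := 31462773081/10000000000) 1270 768 (by norm_num) (by norm_num) (by rw [pow_split8 _ 768, pow_split8 (2:ℝ) 1270]; norm_num); norm_num at this ⊢; exact this)
    (by have := rpow_ub (c := 31776687687/10000000000) 1281 768 (by norm_num) (by norm_num) (by rw [pow_split8 _ 768, pow_split8 (2:ℝ) 1281]; norm_num); norm_num at this ⊢; exact this)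
    (by norm_num) (by norm_num) (by norm_num) (by norm_num)
    (by norm_num) (by norm_num) (by norm_num) (by norm_num)

lemma I64 {s : ℝ} (h1 : (427/256:ℝ) ≤ s) (h2 : s ≤ (647/384:ℝ)) : 0 ≤ F2 s :=
  step (a := 427/256) (b := 647/384) (xa := 15888343843/5000000000) (xb := 32151718101/10000000000) (V := 6290541/10000000) (S := 404623137/500000000)
    h1 h2 (by norm_num) (by norm_num)
    (by have := rpow_lb (c := 15888343843/5000000000) 1281 768 (by norm_num) (by norm_num) (by rw [pow_split8 _ 768, pow_split8 (2:ℝ) 1281]; norm_num); norm_num at this ⊢; exact this)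
    (by have := rpow_ub (c := 32151718101/10000000000) 1294 768 (by norm_num) (by norm_num) (by rw [pow_split8 _ 768, pow_split8 (2:ℝ) 1294]; norm_num); norm_num at this ⊢; exact this)
    (by norm_num) (by norm_num) (by norm_num) (by norm_num)
    (by norm_num) (by norm_num) (by norm_num) (by norm_num)

lemma I65 {s : ℝ} (h1 : (647/384:ℝ) ≤ s) (h2 : s ≤ (109/64:ℝ)) : 0 ≤ F2 s :=
  step (a := 647/384) (b := 109/64) (xa := 321517181/100000000) (xb := 16280274219/5000000000) (V := 49884/78125) (S := 2009237147/2500000000)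
    h1 h2 (by norm_num) (by norm_num)
    (by have := rpow_lb (c := 321517181/100000000) 1294 768 (by norm_num) (by norm_num) (by rw [pow_split8 _ 768, pow_split8 (2:ℝ) 1294]; norm_num); norm_num at this ⊢; exact this)
    (by have := rpow_ub (c := 16280274219/5000000000) 1308 768 (by norm_num) (by norm_num) (by rw [pow_split8 _ 768, pow_split8 (2:ℝ) 1308]; norm_num); norm_num at this ⊢; exact this)
    (by norm_num) (by norm_num) (by norm_num) (by norm_num)
    (by norm_num) (by norm_num) (by norm_num) (by norm_num)

lemma I66 {s : ℝ} (h1 : (109/64:ℝ) ≤ s) (h2 : s ≤ (331/192:ℝ)) : 0 ≤ F2 s :=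
  step (a := 109/64) (b := 331/192) (xa := 32560548437/10000000000) (xb := 825853813/250000000) (V := 6484937/10000000) (S := 3988826957/5000000000)
    h1 h2 (by norm_num) (by norm_num)
    (by have := rpow_lb (c := 32560548437/10000000000) 1308 768 (by norm_num) (by norm_num) (by rw [pow_split8 _ 768, pow_split8 (2:ℝ) 1308]; norm_num); norm_num at this ⊢; exact this)
    (by have := rpow_ub (c := 825853813/250000000) 1324 768 (by norm_num) (by norm_num) (by rw [pow_split8 _ 768, pow_split8 (2:ℝ) 1324]; norm_num); norm_num at this ⊢; exact this)
    (by norm_num) (by norm_num) (by norm_num) (by norm_num)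
    (by norm_num) (by norm_num) (by norm_num) (by norm_num)

lemma I67 {s : ℝ} (h1 : (331/192:ℝ) ≤ s) (h2 : s ≤ (671/384:ℝ)) : 0 ≤ F2 s :=
  step (a := 331/192) (b := 671/384) (xa := 33034152519/10000000000) (xb := 33575196273/10000000000) (V := 3298197/5000000) (S := 7910528879/10000000000)
    h1 h2 (by norm_num) (by norm_num)
    (by have := rpow_lb (c := 33034152519/10000000000) 1324 768 (by norm_num) (by norm_num) (by rw [pow_split8 _ 768, pow_split8 (2:ℝ) 1324]; norm_num); norm_num at this ⊢; exact this)
    (by have := rpow_ub (c := 33575196273/10000000000) 1342 768 (by norm_num) (by norm_num) (by rw [pow_split8 _ 768, pow_split8 (2:ℝ) 1342]; norm_num); norm_num at this ⊢; exact this)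
    (by norm_num) (by norm_num) (by norm_num) (by norm_num)
    (by norm_num) (by norm_num) (by norm_num) (by norm_num)

lemma I68 {s : ℝ} (h1 : (671/384:ℝ) ≤ s) (h2 : s ≤ (1363/768:ℝ)) : 0 ≤ F2 s :=
  step (a := 671/384) (b := 1363/768) (xa := 2098449767/625000000) (xb := 34217623947/10000000000) (V := 1343721/2000000) (S := 3917927311/5000000000)
    h1 h2 (by norm_num) (by norm_num)
    (by have := rpow_lb (c := 2098449767/625000000) 1342 768 (by norm_num) (by norm_num) (by rw [pow_split8 _ 768, pow_split8 (2:ℝ) 1342]; norm_num); norm_num at this ⊢; exact this)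
    (by have := rpow_ub (c := 34217623947/10000000000) 1363 768 (by norm_num) (by norm_num) (by rw [pow_split8 _ 768, pow_split8 (2:ℝ) 1363]; norm_num); norm_num at this ⊢; exact this)
    (by norm_num) (by norm_num) (by norm_num) (by norm_num)
    (by norm_num) (by norm_num) (by norm_num) (by norm_num)

lemma I69 {s : ℝ} (h1 : (1363/768:ℝ) ≤ s) (h2 : s ≤ (1387/768:ℝ)) : 0 ≤ F2 s :=
  step (a := 1363/768) (b := 1387/768) (xa := 17108811973/5000000000) (xb := 6993378469/2000000000) (V := 3428553/5000000) (S := 968736037/1250000000)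
    h1 h2 (by norm_num) (by norm_num)
    (by have := rpow_lb (c := 17108811973/5000000000) 1363 768 (by norm_num) (by norm_num) (by rw [pow_split8 _ 768, pow_split8 (2:ℝ) 1363]; norm_num); norm_num at this ⊢; exact this)
    (by have := rpow_ub (c := 6993378469/2000000000) 1387 768 (by norm_num) (by norm_num) (by rw [pow_split8 _ 768, pow_split8 (2:ℝ) 1387]; norm_num); norm_num at this ⊢; exact this)
    (by norm_num) (by norm_num) (by norm_num) (by norm_num)
    (by norm_num) (by norm_num) (by norm_num) (by norm_num)

lemma I70 {s : ℝ} (h1 : (1387/768:ℝ) ≤ s) (h2 : s ≤ (1415/768:ℝ)) : 0 ≤ F2 s :=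
  step (a := 1387/768) (b := 1415/768) (xa := 4370861543/1250000000) (xb := 17930900173/5000000000) (V := 7010257/10000000) (S := 7653198281/10000000000)
    h1 h2 (by norm_num) (by norm_num)
    (by have := rpow_lb (c := 4370861543/1250000000) 1387 768 (by norm_num) (by norm_num) (by rw [pow_split8 _ 768, pow_split8 (2:ℝ) 1387]; norm_num); norm_num at this ⊢; exact this)
    (by have := rpow_ub (c := 17930900173/5000000000) 1415 768 (by norm_num) (by norm_num) (by rw [pow_split8 _ 768, pow_split8 (2:ℝ) 1415]; norm_num); norm_num at this ⊢; exact this)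
    (by norm_num) (by norm_num) (by norm_num) (by norm_num)
    (by norm_num) (by norm_num) (by norm_num) (by norm_num)

lemma I71 {s : ℝ} (h1 : (1415/768:ℝ) ≤ s) (h2 : s ≤ (181/96:ℝ)) : 0 ≤ F2 s :=
  step (a := 1415/768) (b := 181/96) (xa := 7172360069/2000000000) (xb := 36945961301/10000000000) (V := 7182367/10000000) (S := 3771265603/5000000000)
    h1 h2 (by norm_num) (by norm_num)
    (by have := rpow_lb (c := 7172360069/2000000000) 1415 768 (by norm_num) (by norm_num) (by rw [pow_split8 _ 768, pow_split8 (2:ℝ) 1415]; norm_num); norm_num at this ⊢; exact this)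
    (by have := rpow_ub (c := 36945961301/10000000000) 1448 768 (by norm_num) (by norm_num) (by rw [pow_split8 _ 768, pow_split8 (2:ℝ) 1448]; norm_num); norm_num at this ⊢; exact this)
    (by norm_num) (by norm_num) (by norm_num) (by norm_num)
    (by norm_num) (by norm_num) (by norm_num) (by norm_num)

lemma I72 {s : ℝ} (h1 : (181/96:ℝ) ≤ s) (h2 : s ≤ (31/16:ℝ)) : 0 ≤ F2 s :=
  step (a := 181/96) (b := 31/16) (xa := 369459613/100000000) (xb := 9576032807/2500000000) (V := 3688333/5000000) (S := 37075481/50000000)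
    h1 h2 (by norm_num) (by norm_num)
    (by have := rpow_lb (c := 369459613/100000000) 1448 768 (by norm_num) (by norm_num) (by rw [pow_split8 _ 768, pow_split8 (2:ℝ) 1448]; norm_num); norm_num at this ⊢; exact this)
    (by have := rpow_ub (c := 9576032807/2500000000) 1488 768 (by norm_num) (by norm_num) (by rw [pow_split8 _ 768, pow_split8 (2:ℝ) 1488]; norm_num); norm_num at this ⊢; exact this)
    (by norm_num) (by norm_num) (by norm_num) (by norm_num)
    (by norm_num) (by norm_num) (by norm_num) (by norm_num)

lemma I73 {s : ℝ} (h1 : (31/16:ℝ) ≤ s) (h2 : s ≤ (2:ℝ)) : 0 ≤ F2 s :=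
  step (a := 31/16) (b := 2) (xa := 38304131227/10000000000) (xb := 4) (V := 12161/16000) (S := 3632499609/5000000000)
    h1 h2 (by norm_num) (by norm_num)
    (by have := rpow_lb (c := 38304131227/10000000000) 1488 768 (by norm_num) (by norm_num) (by rw [pow_split8 _ 768, pow_split8 (2:ℝ) 1488]; norm_num); norm_num at this ⊢; exact this)
    (by rw [show ((2:ℝ)) = (((2:ℕ)):ℝ) by norm_num, Real.rpow_natCast]; norm_num)
    (by norm_num) (by norm_num) (by norm_num) (by norm_num)
    (by norm_num) (by norm_num) (by norm_num) (by norm_num)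

set_option maxHeartbeats 4000000 in
lemma F2_nonneg {s : ℝ} (hs : s ∈ Set.Icc (4/3 : ℝ) 2) : 0 ≤ F2 s := by
  obtain ⟨hlo, hhi⟩ := hs
  rcases le_total s (343/256:ℝ) with h0|h0
  · exact I0 (by linarith) h0
  rcases le_total s (517/384:ℝ) with h1|h1
  · exact I1 (by linarith) h1
  rcases le_total s (1039/768:ℝ) with h2|h2
  · exact I2 (by linarith) h2
  rcases le_total s (1043/768:ℝ) with h3|h3
  · exact I3 (by linarith) h3
  rcases le_total s (349/256:ℝ) with h4|h4
  · exact I4 (by linarith) h4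
  rcases le_total s (1051/768:ℝ) with h5|h5
  · exact I5 (by linarith) h5
  rcases le_total s (1055/768:ℝ) with h6|h6
  · exact I6 (by linarith) h6
  rcases le_total s (353/256:ℝ) with h7|h7
  · exact I7 (by linarith) h7
  rcases le_total s (177/128:ℝ) with h8|h8
  · exact I8 (by linarith) h8
  rcases le_total s (355/256:ℝ) with h9|h9
  · exact I9 (by linarith) h9
  rcases le_total s (89/64:ℝ) with h10|h10
  · exact I10 (by linarith) h10
  rcases le_total s (357/256:ℝ) with h11|h11
  · exact I11 (by linarith) h11
  rcases le_total s (179/128:ℝ) with h12|h12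
  · exact I12 (by linarith) h12
  rcases le_total s (359/256:ℝ) with h13|h13
  · exact I13 (by linarith) h13
  rcases le_total s (45/32:ℝ) with h14|h14
  · exact I14 (by linarith) h14
  rcases le_total s (361/256:ℝ) with h15|h15
  · exact I15 (by linarith) h15
  rcases le_total s (181/128:ℝ) with h16|h16
  · exact I16 (by linarith) h16
  rcases le_total s (363/256:ℝ) with h17|h17
  · exact I17 (by linarith) h17
  rcases le_total s (91/64:ℝ) with h18|h18
  · exact I18 (by linarith) h18
  rcases le_total s (365/256:ℝ) with h19|h19
  · exact I19 (by linarith) h19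
  rcases le_total s (183/128:ℝ) with h20|h20
  · exact I20 (by linarith) h20
  rcases le_total s (367/256:ℝ) with h21|h21
  · exact I21 (by linarith) h21
  rcases le_total s (23/16:ℝ) with h22|h22
  · exact I22 (by linarith) h22
  rcases le_total s (553/384:ℝ) with h23|h23
  · exact I23 (by linarith) h23
  rcases le_total s (277/192:ℝ) with h24|h24
  · exact I24 (by linarith) h24
  rcases le_total s (185/128:ℝ) with h25|h25
  · exact I25 (by linarith) h25
  rcases le_total s (139/96:ℝ) with h26|h26
  · exact I26 (by linarith) h26
  rcases le_total s (557/384:ℝ) with h27|h27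
  · exact I27 (by linarith) h27
  rcases le_total s (93/64:ℝ) with h28|h28
  · exact I28 (by linarith) h28
  rcases le_total s (559/384:ℝ) with h29|h29
  · exact I29 (by linarith) h29
  rcases le_total s (1121/768:ℝ) with h30|h30
  · exact I30 (by linarith) h30
  rcases le_total s (281/192:ℝ) with h31|h31
  · exact I31 (by linarith) h31
  rcases le_total s (1127/768:ℝ) with h32|h32
  · exact I32 (by linarith) h32
  rcases le_total s (565/384:ℝ) with h33|h33
  · exact I33 (by linarith) h33
  rcases le_total s (1133/768:ℝ) with h34|h34
  · exact I34 (by linarith) h34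
  rcases le_total s (71/48:ℝ) with h35|h35
  · exact I35 (by linarith) h35
  rcases le_total s (1139/768:ℝ) with h36|h36
  · exact I36 (by linarith) h36
  rcases le_total s (571/384:ℝ) with h37|h37
  · exact I37 (by linarith) h37
  rcases le_total s (1145/768:ℝ) with h38|h38
  · exact I38 (by linarith) h38
  rcases le_total s (287/192:ℝ) with h39|h39
  · exact I39 (by linarith) h39
  rcases le_total s (1151/768:ℝ) with h40|h40
  · exact I40 (by linarith) h40
  rcases le_total s (577/384:ℝ) with h41|h41
  · exact I41 (by linarith) h41
  rcases le_total s (1157/768:ℝ) with h42|h42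
  · exact I42 (by linarith) h42
  rcases le_total s (145/96:ℝ) with h43|h43
  · exact I43 (by linarith) h43
  rcases le_total s (1163/768:ℝ) with h44|h44
  · exact I44 (by linarith) h44
  rcases le_total s (389/256:ℝ) with h45|h45
  · exact I45 (by linarith) h45
  rcases le_total s (1171/768:ℝ) with h46|h46
  · exact I46 (by linarith) h46
  rcases le_total s (1175/768:ℝ) with h47|h47
  · exact I47 (by linarith) h47
  rcases le_total s (393/256:ℝ) with h48|h48
  · exact I48 (by linarith) h48
  rcases le_total s (1183/768:ℝ) with h49|h49
  · exact I49 (by linarith) h49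
  rcases le_total s (1187/768:ℝ) with h50|h50
  · exact I50 (by linarith) h50
  rcases le_total s (149/96:ℝ) with h51|h51
  · exact I51 (by linarith) h51
  rcases le_total s (399/256:ℝ) with h52|h52
  · exact I52 (by linarith) h52
  rcases le_total s (601/384:ℝ) with h53|h53
  · exact I53 (by linarith) h53
  rcases le_total s (151/96:ℝ) with h54|h54
  · exact I54 (by linarith) h54
  rcases le_total s (607/384:ℝ) with h55|h55
  · exact I55 (by linarith) h55
  rcases le_total s (305/192:ℝ) with h56|h56
  · exact I56 (by linarith) h56
  rcases le_total s (409/256:ℝ) with h57|h57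
  · exact I57 (by linarith) h57
  rcases le_total s (617/384:ℝ) with h58|h58
  · exact I58 (by linarith) h58
  rcases le_total s (207/128:ℝ) with h59|h59
  · exact I59 (by linarith) h59
  rcases le_total s (417/256:ℝ) with h60|h60
  · exact I60 (by linarith) h60
  rcases le_total s (105/64:ℝ) with h61|h61
  · exact I61 (by linarith) h61
  rcases le_total s (635/384:ℝ) with h62|h62
  · exact I62 (by linarith) h62
  rcases le_total s (427/256:ℝ) with h63|h63
  · exact I63 (by linarith) h63
  rcases le_total s (647/384:ℝ) with h64|h64
  · exact I64 (by linarith) h64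
  rcases le_total s (109/64:ℝ) with h65|h65
  · exact I65 (by linarith) h65
  rcases le_total s (331/192:ℝ) with h66|h66
  · exact I66 (by linarith) h66
  rcases le_total s (671/384:ℝ) with h67|h67
  · exact I67 (by linarith) h67
  rcases le_total s (1363/768:ℝ) with h68|h68
  · exact I68 (by linarith) h68
  rcases le_total s (1387/768:ℝ) with h69|h69
  · exact I69 (by linarith) h69
  rcases le_total s (1415/768:ℝ) with h70|h70
  · exact I70 (by linarith) h70
  rcases le_total s (181/96:ℝ) with h71|h71
  · exact I71 (by linarith) h71
  rcases le_total s (31/16:ℝ) with h72|h72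
  · exact I72 (by linarith) h72
  exact I73 (by linarith) (by linarith)

theorem stmt_5 (s : ℝ) (hs : s ∈ Set.Icc (4/3 : ℝ) 2) :
    -(s - 1) * Real.log ((2 : ℝ) ^ s - 1) + (s - 2) * Real.log ((2 : ℝ) ^ s + 1)
      - s * Real.log (2 * Real.sin (Real.pi / (2 * s))) + Real.log 6 ≤ 0 := by
  have hD : Convex ℝ (Set.Icc (4/3 : ℝ) 2) := convex_Icc _ _
  have hint : interior (Set.Icc (4/3 : ℝ) 2) = Set.Ioo (4/3 : ℝ) 2 := interior_Icc
  have hgt : ∀ x ∈ Set.Icc (4/3 : ℝ) 2, (1:ℝ) < x := fun x hx => by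
    have := hx.1; linarith
  have hcont : ContinuousOn F (Set.Icc (4/3 : ℝ) 2) := fun x hx =>
    (hasDerivAt_F (hgt x hx)).differentiableAt.continuousAt.continuousWithinAt
  have hconv : ConvexOn ℝ (Set.Icc (4/3 : ℝ) 2) F := by
    apply convexOn_of_hasDerivWithinAt2_nonneg hD hcont (f' := F1) (f'' := F2)
    · intro x hx
      rw [hint] at hx
      exact (hasDerivAt_F (by linarith [hx.1] : (1:ℝ) < x)).hasDerivWithinAt
    · intro x hx
      rw [hint] at hx
      exact (hasDerivAt_F1 (by linarith [hx.1] : (1:ℝ) < x)).hasDerivWithinAt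
    · intro x hx
      rw [hint] at hx
      exact F2_nonneg ⟨le_of_lt hx.1, le_of_lt hx.2⟩
  have hmem : s ∈ segment ℝ (4/3 : ℝ) 2 := by
    rwa [segment_eq_Icc (by norm_num : (4/3:ℝ) ≤ 2)]
  have := hconv.le_on_segment (Set.left_mem_Icc.2 (by norm_num)) (Set.right_mem_Icc.2 (by norm_num)) hmem
  have hmax : max (F (4/3)) (F 2) ≤ 0 := max_le F_fourthirds (le_of_eq F_two)
  have hFs : F s ≤ 0 := le_trans this hmax
  unfold F at hFs
  exact hFs
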